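/- arXiv:2508.13106 — 10 statements merged into one kernel-verified Lean document; each statement's English description precedes it below -/
import Mathlib

section
/- Let p be a prime and let R be a commutative ring such that x ^ p = x for every x ∈ R. If R is finitely generated as a ring, then R is a finite ring. -/
/-- A `p`-Boolean ring which is finitely generated as a ring is finite. -/
theorem pBoolean_finite_of_fg (p : ℕ) (hp : p.Prime) (R : Type*) [CommRing R]
    (hR : ∀ x : R, x ^ p = x) (S : Finset R)
    (h : Subring.closure (S : Set R) = ⊤) : Finite R := by
  classical
  have hp2 : 2 ≤ p := hp.two_le
  -- exponent reduction
  have pow_red : ∀ (s : R) (n : ℕ), ∃ m, m < p ∧ s ^ n = s ^ m := by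
    intro s n
    induction n using Nat.strong_induction_on with
    | _ n ih =>
      rcases lt_or_ge n p with hn | hn
      · exact ⟨n, hn, rfl⟩
      · obtain ⟨m, hm, hsm⟩ := ih (n - p + 1) (by omega)
        refine ⟨m, hm, ?_⟩
        have hn' : n = (n - p) + p := by omega
        rw [hn', pow_add, hR s, ← pow_succ, hsm]
  set f : ({x // x ∈ S} → Fin p) → R := fun e => ∏ s : {x // x ∈ S}, (s : R) ^ (e s : ℕ) with hf
  set T : Set R := Set.range f with hT
  have hTfin : T.Finite := Set.finite_range f
  have h1T : (1 : R) ∈ T := ⟨fun _ => ⟨0, by omega⟩, by simp [hf]⟩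
  have hST : ∀ s ∈ S, s ∈ T := by
    intro s hs
    refine ⟨fun t => if t = ⟨s, hs⟩ then ⟨1, by omega⟩ else ⟨0, by omega⟩, ?_⟩
    show (∏ t : {x // x ∈ S}, (t : R) ^ (((if t = ⟨s, hs⟩ then (⟨1, by omega⟩ : Fin p) else ⟨0, by omega⟩) : Fin p) : ℕ)) = s
    rw [Finset.prod_eq_single (⟨s, hs⟩ : {x // x ∈ S})]
    · simp
    · intro b _ hb; simp [hb]
    · intro hb; exact absurd (Finset.mem_univ _) hb
  have hmulT : ∀ x ∈ T, ∀ y ∈ T, x * y ∈ T := by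
    rintro _ ⟨a, rfl⟩ _ ⟨b, rfl⟩
    choose g hg hg' using fun s : {x // x ∈ S} => pow_red (s : R) ((a s : ℕ) + (b s : ℕ))
    refine ⟨fun s => ⟨g s, hg s⟩, ?_⟩
    show (∏ s : {x // x ∈ S}, (s : R) ^ (g s)) = f a * f b
    rw [hf]
    simp only [← Finset.prod_mul_distrib, ← pow_add]
    exact Finset.prod_congr rfl fun s _ => (hg' s).symm
  -- every element is in the additive closure of T
  have hG : ∀ x : R, x ∈ AddSubgroup.closure T := by
    have key : ∀ x ∈ T, ∀ y ∈ AddSubgroup.closure T, x * y ∈ AddSubgroup.closure T := by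
      intro x hx y hy
      induction hy using AddSubgroup.closure_induction with
      | mem z hz => exact AddSubgroup.subset_closure (hmulT x hx z hz)
      | zero => simpa using AddSubgroup.zero_mem _
      | add z w _ _ hz hw => rw [mul_add]; exact AddSubgroup.add_mem _ hz hw
      | neg z _ hz => rw [mul_neg]; exact AddSubgroup.neg_mem _ hz
    have key2 : ∀ x ∈ AddSubgroup.closure T, ∀ y ∈ AddSubgroup.closure T,
        x * y ∈ AddSubgroup.closure T := by
      intro x hx y hy
      induction hx using AddSubgroup.closure_induction with
      | mem z hz => exact key z hz y hy
      | zero => simpa using AddSubgroup.zero_mem _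
      | add z w _ _ hz hw => rw [add_mul]; exact AddSubgroup.add_mem _ hz hw
      | neg z _ hz => rw [neg_mul]; exact AddSubgroup.neg_mem _ hz
    intro x
    have hx : x ∈ Subring.closure (S : Set R) := h ▸ Subring.mem_top x
    induction hx using Subring.closure_induction with
    | mem s hs => exact AddSubgroup.subset_closure (hST s hs)
    | zero => exact AddSubgroup.zero_mem _
    | one => exact AddSubgroup.subset_closure h1T
    | add x y _ _ hx hy => exact AddSubgroup.add_mem _ hx hy
    | neg x _ hx => exact AddSubgroup.neg_mem _ hx
    | mul x y _ _ hx hy => exact key2 x hx y hy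
  have hFG : AddGroup.FG R := by
    rw [AddGroup.fg_iff]
    exact ⟨T, AddSubgroup.eq_top_iff' _ |>.mpr hG ▸ rfl, hTfin⟩
  -- torsion
  have htor : AddMonoid.IsTorsion R := by
    intro x
    have h2 : ((2 : R)) ^ p * x = 2 * x := by
      have := hR (2 * x)
      rwa [mul_pow, hR x] at this
    have hge : 4 ≤ 2 ^ p := by
      calc (4 : ℕ) = 2 ^ 2 := by norm_num
      _ ≤ 2 ^ p := Nat.pow_le_pow_right (by norm_num) hp2
    have hz : ((2 ^ p - 2 : ℕ) : R) * x = 0 := by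
      rw [Nat.cast_sub (by omega)]
      push_cast
      rw [sub_mul, h2, sub_self]
    rw [isOfFinAddOrder_iff_nsmul_eq_zero]
    exact ⟨2 ^ p - 2, by omega, by rw [nsmul_eq_mul]; exact hz⟩
  exact AddCommGroup.finite_of_fg_torsion R htor
end

section
/- Every finite Boolean ring R is isomorphic, as a ring, to a ring of functions (I → ZMod 2) for some finite type I. That is, there exist a finite type I and a ring isomorphism R ≃+* (I → ZMod 2). -/
section Aux

variable {B : Type*} [BooleanAlgebra B]

private lemma atom_le_compl_iff {a x : B} (ha : IsAtom a) : a ≤ xᶜ ↔ ¬ a ≤ x := by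
  constructor
  · intro h hA
    exact ha.1 (le_bot_iff.mp (by simpa using le_inf_iff.2 ⟨hA, h⟩))
  · intro h
    rcases ha.le_iff.mp (inf_le_left : a ⊓ x ≤ a) with h0 | h1
    · exact le_compl_iff_disjoint_right.mpr (disjoint_iff.mpr h0)
    · exact absurd (by rw [← h1]; exact inf_le_right) h

private lemma atom_le_sup_iff {a x y : B} (ha : IsAtom a) :
    a ≤ x ⊔ y ↔ a ≤ x ∨ a ≤ y := by
  constructor
  · intro h
    by_contra hc
    push_neg at hc
    have h1 : a ≤ xᶜ := (atom_le_compl_iff ha).mpr hc.1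
    have h2 : a ≤ yᶜ := (atom_le_compl_iff ha).mpr hc.2
    have : a ≤ (x ⊔ y)ᶜ := by rw [compl_sup]; exact le_inf h1 h2
    exact ((atom_le_compl_iff ha).mp this) h
  · rintro (h | h)
    · exact h.trans le_sup_left
    · exact h.trans le_sup_right

private lemma atom_le_symmDiff_iff {a x y : B} (ha : IsAtom a) :
    a ≤ symmDiff x y ↔ ¬ ((a ≤ x) ↔ (a ≤ y)) := by
  rw [symmDiff_def, atom_le_sup_iff ha, sdiff_eq, sdiff_eq, le_inf_iff, le_inf_iff,
    atom_le_compl_iff ha, atom_le_compl_iff ha]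
  tauto

private lemma zmodIteMul {p q r : Prop} (dp : Decidable p) (dq : Decidable q)
    (dr : Decidable r) (h : r ↔ p ∧ q) :
    (@ite _ r dr (1 : ZMod 2) 0) = (@ite _ p dp (1 : ZMod 2) 0) * (@ite _ q dq (1 : ZMod 2) 0) := by
  by_cases hp : p <;> by_cases hq : q <;> simp [h, hp, hq]

private lemma zmodIteAdd {p q r : Prop} (dp : Decidable p) (dq : Decidable q)
    (dr : Decidable r) (h : r ↔ ¬ (p ↔ q)) :
    (@ite _ r dr (1 : ZMod 2) 0) = (@ite _ p dp (1 : ZMod 2) 0) + (@ite _ q dq (1 : ZMod 2) 0) := by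
  by_cases hp : p <;> by_cases hq : q <;> simp [h, hp, hq] <;> decide

private lemma zmodIteInj {p q : Prop} {dp : Decidable p} {dq : Decidable q}
    (h : (@ite _ p dp (1 : ZMod 2) 0) = (@ite _ q dq (1 : ZMod 2) 0)) : p ↔ q := by
  by_cases hp : p <;> by_cases hq : q <;> simp_all

end Aux

/-- Every finite Boolean ring is isomorphic to a ring of functions `I → ZMod 2`
for some finite type `I`. -/
theorem finite_boolean_ring_iso_functions (R : Type*) [BooleanRing R] [Finite R] :
    ∃ (I : Type) (_ : Finite I), Nonempty (R ≃+* (I → ZMod 2)) := by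
  classical
  -- Work with the Boolean algebra associated to `R`.
  let B := AsBoolAlg R
  haveI : Finite B := ‹Finite R›
  haveI : IsAtomic B := Finite.to_isAtomic
  let J := {a : B // IsAtom a}
  haveI : Finite J := Subtype.finite
  haveI : Fintype J := Fintype.ofFinite J
  have h01 : ∀ z : ZMod 2, z = 0 ∨ z = 1 := by decide
  -- The evaluation-at-atoms ring homomorphism.
  let f : R →+* (J → ZMod 2) :=
    { toFun := fun r a => @ite _ ((a : B) ≤ toBoolAlg r) (Classical.dec _) 1 0
      map_one' := by
        funext a
        simp [toBoolAlg_one]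
      map_zero' := by
        funext a
        simp only [toBoolAlg_zero, le_bot_iff, Pi.zero_apply]
        exact if_neg (fun hc => a.2.1 (le_bot_iff.mp hc))
      map_mul' := by
        classical
        intro r s
        funext a
        simp only [Pi.mul_apply]
        have hiff : ((a : B) ≤ toBoolAlg (r * s)) ↔
            (((a : B) ≤ toBoolAlg r) ∧ ((a : B) ≤ toBoolAlg s)) := by
          rw [toBoolAlg_mul, le_inf_iff]
        exact zmodIteMul _ _ _ hiff
      map_add' := by
        classical
        intro r s
        funext a
        simp only [Pi.add_apply]
        have hiff : ((a : B) ≤ toBoolAlg (r + s)) ↔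
            ¬ (((a : B) ≤ toBoolAlg r) ↔ ((a : B) ≤ toBoolAlg s)) := by
          rw [toBoolAlg_add]; exact atom_le_symmDiff_iff a.2
        exact zmodIteAdd _ _ _ hiff }
  have hinj : Function.Injective f := by
    intro r s h
    have key : ∀ a : B, IsAtom a → ((a ≤ toBoolAlg r) ↔ (a ≤ toBoolAlg s)) := by
      intro a ha
      have hfa := congrFun h ⟨a, ha⟩
      simp only [f, RingHom.coe_mk, MonoidHom.coe_mk, OneHom.coe_mk] at hfa
      exact zmodIteInj hfa
    have : toBoolAlg r = toBoolAlg s :=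
      le_antisymm
        (BooleanAlgebra.le_iff_atom_le_imp.mpr fun a ha hA => (key a ha).mp hA)
        (BooleanAlgebra.le_iff_atom_le_imp.mpr fun a ha hA => (key a ha).mpr hA)
    exact toBoolAlg_inj.mp this
  have hsurj : Function.Surjective f := by
    intro g
    set s : Finset J := Finset.univ.filter (fun a => g a = 1) with hs
    refine ⟨ofBoolAlg (s.sup (fun a => (a : B))), ?_⟩
    funext b
    have hprime : SupPrime (b : B) := by
      refine ⟨fun hmin => b.2.1 (le_bot_iff.mp (hmin bot_le)), ?_⟩
      intro x y hxy
      exact (atom_le_sup_iff b.2).mp hxy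
    have hle : (b : B) ≤ s.sup (fun a => (a : B)) ↔ b ∈ s := by
      rw [hprime.le_finset_sup]
      constructor
      · rintro ⟨i, hi, hbi⟩
        rcases i.2.le_iff.mp hbi with h0 | h1
        · exact absurd h0 b.2.1
        · rwa [show b = i from Subtype.ext h1]
      · intro hb
        exact ⟨b, hb, le_rfl⟩
    have hmem : b ∈ s ↔ g b = 1 := by simp [hs]
    simp only [f, RingHom.coe_mk, MonoidHom.coe_mk, OneHom.coe_mk, toBoolAlg_ofBoolAlg]
    rcases h01 (g b) with h | h
    · rw [h]; exact if_neg (fun hc => by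
        have hx := hmem.mp (hle.mp hc); rw [h] at hx; exact zero_ne_one hx)
    · rw [h]; exact if_pos (hle.mpr (hmem.mpr h))
  -- Transport along a finite enumeration to land in `Type 0`.
  let e : R ≃+* (J → ZMod 2) := RingEquiv.ofBijective f ⟨hinj, hsurj⟩
  let n := Fintype.card J
  let eqv : J ≃ Fin n := Fintype.equivFin J
  exact ⟨Fin n, inferInstance,
    ⟨e.trans (RingEquiv.piCongrLeft (fun _ => ZMod 2) eqv)⟩⟩
end

section
/- Let p be a prime and S a finite type. The map sending s : S to the evaluation homomorphism ev_s : (S → ZMod p) →+* ZMod p, ev_s f = f s, is a bijection from S onto the set of ring homomorphisms (S → ZMod p) →+* ZMod p. In particular, every ring homomorphism (S → ZMod p) → ZMod p is evaluation at a unique point of S. -/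
/-- For a prime `p` and a finite type `S`, every ring homomorphism
`(S → ZMod p) →+* ZMod p` is evaluation at a unique point of `S`. -/
theorem eval_bijective (p : ℕ) (hp : p.Prime) (S : Type*) [Finite S] :
    Function.Bijective
      (fun s : S => Pi.evalRingHom (fun _ : S => ZMod p) s) := by
  haveI : Fact p.Prime := ⟨hp⟩
  classical
  haveI : Fintype S := Fintype.ofFinite S
  set e : S → (S → ZMod p) := fun s x => if x = s then 1 else 0 with he
  constructor
  · intro s t hst
    have h := congrArg (fun φ : (S → ZMod p) →+* ZMod p => φ (e s)) hst
    simp only [Pi.evalRingHom_apply, he] at h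
    by_contra hne
    rw [if_true, if_neg (fun h' => hne h'.symm)] at h
    exact one_ne_zero h
  · intro φ
    -- φ of a constant function is that constant
    have hconst : ∀ c : ZMod p, φ (fun _ => c) = c := by
      intro c
      have : φ.comp (Pi.constRingHom S (ZMod p)) = RingHom.id (ZMod p) :=
        RingHom.ext_zmod _ _
      exact congrArg (fun ψ : ZMod p →+* ZMod p => ψ c) this
    -- sum of idempotents is 1
    have hsum : (∑ s, e s) = (1 : S → ZMod p) := by
      funext x
      simp [he, Finset.sum_ite_eq]
    have h1 : (∑ s, φ (e s)) = 1 := by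
      rw [← map_sum, hsum, map_one]
    obtain ⟨s, -, hs⟩ : ∃ s ∈ Finset.univ, φ (e s) ≠ 0 := by
      by_contra h
      push_neg at h
      rw [Finset.sum_eq_zero (fun s hs => h s hs)] at h1
      exact zero_ne_one h1
    have hidem : φ (e s) * φ (e s) = φ (e s) := by
      rw [← map_mul]
      congr 1
      funext x
      simp [he]
    have hone : φ (e s) = 1 := by
      have h2 : φ (e s) * φ (e s) = φ (e s) * 1 := by rw [hidem, mul_one]
      exact mul_left_cancel₀ hs h2
    refine ⟨s, ?_⟩
    refine RingHom.ext fun f => ?_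
    simp only [Pi.evalRingHom_apply]
    have key : f * e s = (fun _ => f s) * e s := by
      funext x
      simp only [Pi.mul_apply, he]
      by_cases hx : x = s <;> simp [hx]
    have := congrArg φ key
    rw [map_mul, map_mul, hone, mul_one, mul_one, hconst] at this
    exact this.symm
end

section
/- Let p be a prime and let S, T be finite types. Precomposition, sending a function u : T → S to the ring homomorphism (S → ZMod p) →+* (T → ZMod p) given by g ↦ g ∘ u, is a bijection from the set of functions T → S onto the set of ring homomorphisms (S → ZMod p) →+* (T → ZMod p). -/
lemma exists_eval_eq (p : ℕ) (hp : p.Prime) (S : Type*) [Finite S]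
    (φ : (S → ZMod p) →+* ZMod p) :
    ∃ s : S, ∀ g : S → ZMod p, φ g = g s := by
  haveI : Fact p.Prime := ⟨hp⟩
  haveI := Fintype.ofFinite S
  haveI := Classical.decEq S
  set e : S → (S → ZMod p) := fun s => Pi.single s 1 with he
  have hsum : ∑ s, e s = 1 := by
    funext x
    simp [he, Finset.sum_apply, Pi.single_apply]
  have h1 : ∑ s, φ (e s) = 1 := by
    rw [← map_sum, hsum, map_one]
  have : ∃ s, φ (e s) ≠ 0 := by
    by_contra h
    push_neg at h
    rw [Finset.sum_congr rfl (fun s _ => h s)] at h1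
    simp at h1
  obtain ⟨s, hs⟩ := this
  have hidem : e s * e s = e s := by
    funext x
    by_cases hx : x = s <;> simp [he, Pi.single_apply, hx]
  have hone : φ (e s) = 1 := by
    have h2 : φ (e s) * φ (e s) = φ (e s) * 1 := by rw [← map_mul, hidem, mul_one]
    exact mul_left_cancel₀ hs h2
  refine ⟨s, fun g => ?_⟩
  have hkey : g * e s = (fun _ => g s) * e s := by
    funext x
    by_cases hx : x = s <;> simp [he, Pi.single_apply, hx, mul_comm]
  have hconst : φ (fun _ => g s) = g s := by
    obtain ⟨n, hn⟩ := ZMod.intCast_surjective (g s)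
    have : (fun _ : S => g s) = ((n : ℤ) : S → ZMod p) := by
      funext x; simp [← hn]
    rw [this, map_intCast, hn]
  calc φ g = φ g * φ (e s) := by rw [hone, mul_one]
    _ = φ (g * e s) := (map_mul φ _ _).symm
    _ = φ ((fun _ => g s) * e s) := by rw [hkey]
    _ = φ (fun _ => g s) * φ (e s) := map_mul φ _ _
    _ = g s := by rw [hconst, hone, mul_one]

/-- For a prime `p` and finite types `S`, `T`, precomposition `u ↦ (g ↦ g ∘ u)` is a
bijection from the functions `T → S` onto the ring homomorphisms
`(S → ZMod p) →+* (T → ZMod p)`. -/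
theorem precomp_bijective (p : ℕ) (hp : p.Prime) (S T : Type*) [Finite S] [Finite T] :
    Function.Bijective
      (fun u : T → S =>
        (Pi.ringHom (fun t : T => Pi.evalRingHom (fun _ : S => ZMod p) (u t)) :
          (S → ZMod p) →+* (T → ZMod p))) := by
  haveI : Fact p.Prime := ⟨hp⟩
  haveI := Classical.decEq S
  constructor
  · intro u v huv
    funext t
    have := congrArg (fun Φ => (Φ : (S → ZMod p) →+* (T → ZMod p)) (Pi.single (u t) 1) t) huv
    simp only [Pi.ringHom, RingHom.pi_apply, Pi.evalRingHom_apply] at this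
    simp [Pi.single_apply] at this
    by_cases h : v t = u t
    · exact h.symm
    · simp [h] at this
  · intro Φ
    have h := fun t : T => exists_eval_eq p hp S ((Pi.evalRingHom (fun _ : T => ZMod p) t).comp Φ)
    choose u hu using h
    refine ⟨u, ?_⟩
    refine RingHom.ext fun g => funext fun t => ?_
    simpa [Pi.ringHom] using (hu t g).symm
end

section
/- Let p be a prime and n a natural number. The evaluation map from the multivariate polynomial ring MvPolynomial (Fin n) (ZMod p) to the function ring ((Fin n → ZMod p) → ZMod p), sending f to the function a ↦ f(a), is a surjective ring homomorphism whose kernel is the ideal generated by the elements Xᵢ ^ p − Xᵢ for i : Fin n. Hence it induces a ring isomorphism MvPolynomial (Fin n) (ZMod p) ⧸ (X₁ ^ p − X₁, …, Xₙ ^ p − Xₙ) ≃+* ((Fin n → ZMod p) → ZMod p). -/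
open MvPolynomial

section Aux

variable (p n : ℕ)

private noncomputable def myI : Ideal (MvPolynomial (Fin n) (ZMod p)) :=
  Ideal.span (Set.range fun i : Fin n => (X i : MvPolynomial (Fin n) (ZMod p)) ^ p - X i)

private lemma pow_red (hp : p.Prime) (i : Fin n) (k : ℕ) :
    ∃ m ≤ p - 1, Ideal.Quotient.mk (myI p n) ((X i) ^ k)
      = Ideal.Quotient.mk (myI p n) ((X i) ^ m) := by
  induction k using Nat.strong_induction_on with
  | _ k ih =>
    by_cases hk : k ≤ p - 1
    · exact ⟨k, hk, rfl⟩
    · have hp2 : 2 ≤ p := hp.two_le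
      have hkp : p ≤ k := by omega
      obtain ⟨m, hm, hq⟩ := ih (k - p + 1) (by omega)
      refine ⟨m, hm, ?_⟩
      rw [← hq, Ideal.Quotient.eq]
      have h1 : k - p + p = k := by omega
      have : (X i : MvPolynomial (Fin n) (ZMod p)) ^ k - X i ^ (k - p + 1)
          = X i ^ (k - p) * (X i ^ p - X i) := by
        rw [mul_sub, ← pow_add, h1, pow_succ]
      rw [this]
      exact Ideal.mul_mem_left _ _ (Ideal.subset_span ⟨i, rfl⟩)

private lemma exists_restrict (hp : p.Prime) (f : MvPolynomial (Fin n) (ZMod p)) :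
    ∃ g ∈ restrictDegree (Fin n) (ZMod p) (p - 1),
      Ideal.Quotient.mk (myI p n) g = Ideal.Quotient.mk (myI p n) f := by
  induction f using MvPolynomial.induction_on' with
  | add f₁ f₂ h₁ h₂ =>
    obtain ⟨g₁, hg₁, he₁⟩ := h₁
    obtain ⟨g₂, hg₂, he₂⟩ := h₂
    exact ⟨g₁ + g₂, add_mem hg₁ hg₂, by rw [map_add, map_add, he₁, he₂]⟩
  | monomial s c =>
    choose m hm hq using fun i => pow_red p n hp i (s i)
    refine ⟨monomial (Finsupp.equivFunOnFinite.symm m) c, ?_, ?_⟩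
    · rw [mem_restrictDegree]
      intro t ht i
      have := MvPolynomial.support_monomial_subset ht
      simp only [Finset.mem_singleton] at this
      subst this
      simpa using hm i
    · rw [monomial_eq, monomial_eq, Finsupp.prod_fintype _ _ (fun i => pow_zero _),
        Finsupp.prod_fintype _ _ (fun i => pow_zero _)]
      simp only [map_mul, map_prod]
      congr 1
      refine Finset.prod_congr rfl fun i _ => ?_
      simpa using (hq i).symm

end Aux

/-- For a prime `p` and `n : ℕ`, evaluation
`MvPolynomial (Fin n) (ZMod p) →+* ((Fin n → ZMod p) → ZMod p)` is surjective with kernel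
the ideal generated by the `Xᵢ ^ p - Xᵢ`, so it induces a ring isomorphism
`(ZMod p)[x₁,…,xₙ] ⧸ (xᵢ^p - xᵢ) ≃+* ((Fin n → ZMod p) → ZMod p)`. -/
theorem mvPolynomial_eval_surjective_ker (p : ℕ) (hp : p.Prime) (n : ℕ) :
    Function.Surjective
      (Pi.ringHom fun a : Fin n → ZMod p => (MvPolynomial.eval a :
        MvPolynomial (Fin n) (ZMod p) →+* ZMod p)) ∧
    RingHom.ker (Pi.ringHom fun a : Fin n → ZMod p => (MvPolynomial.eval a :
        MvPolynomial (Fin n) (ZMod p) →+* ZMod p)) =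
      Ideal.span (Set.range fun i : Fin n =>
        (X i : MvPolynomial (Fin n) (ZMod p)) ^ p - X i) ∧
    Nonempty ((MvPolynomial (Fin n) (ZMod p) ⧸ Ideal.span (Set.range fun i : Fin n =>
        (X i : MvPolynomial (Fin n) (ZMod p)) ^ p - X i)) ≃+*
      ((Fin n → ZMod p) → ZMod p)) := by
  haveI : Fact p.Prime := ⟨hp⟩
  set φ := Pi.ringHom fun a : Fin n → ZMod p => (MvPolynomial.eval a :
        MvPolynomial (Fin n) (ZMod p) →+* ZMod p) with hφ
  have hcard : Fintype.card (ZMod p) = p := ZMod.card p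
  have hsurj : Function.Surjective φ := by
    intro e
    have htop := MvPolynomial.map_restrict_dom_evalₗ (ZMod p) (Fin n)
    have he : e ∈ (restrictDegree (Fin n) (ZMod p)
        (Fintype.card (ZMod p) - 1)).map (evalₗ (ZMod p) (Fin n)) := by
      rw [htop]; trivial
    obtain ⟨f, -, hf⟩ := Submodule.mem_map.mp he
    exact ⟨f, by ext a; exact congrFun hf a⟩
  have hker : RingHom.ker φ = myI p n := by
    apply le_antisymm
    · intro f hf
      have hev : ∀ a : Fin n → ZMod p, eval a f = 0 := fun a => congrFun hf a
      obtain ⟨g, hg, he⟩ := exists_restrict p n hp f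
      rw [Ideal.Quotient.eq] at he
      have hgev : ∀ a : Fin n → ZMod p, eval a g = 0 := by
        intro a
        have hI : myI p n ≤ RingHom.ker φ := by
          rw [myI, Ideal.span_le]
          rintro _ ⟨i, rfl⟩
          ext a
          simp [φ, ZMod.pow_card]
        have := congrFun (hI he) a
        simp only [φ, Pi.ringHom_apply, map_sub, Pi.sub_apply, Pi.zero_apply] at this ⊢
        have : eval a g - eval a f = 0 := this
        rw [hev a] at this
        simpa using this
      have hg0 : g = 0 := by
        apply MvPolynomial.eq_zero_of_eval_eq_zero (Fin n) (ZMod p) g hgev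
        rwa [hcard]
      rw [hg0, zero_sub] at he
      simpa using (myI p n).neg_mem he
    · rw [myI, Ideal.span_le]
      rintro _ ⟨i, rfl⟩
      simp only [SetLike.mem_coe, RingHom.mem_ker]
      ext a
      simp [φ, ZMod.pow_card]
  refine ⟨hsurj, by rw [hker, myI], ?_⟩
  have e1 := RingHom.quotientKerEquivOfSurjective hsurj
  have e2 : (MvPolynomial (Fin n) (ZMod p) ⧸ Ideal.span (Set.range fun i : Fin n =>
        (X i : MvPolynomial (Fin n) (ZMod p)) ^ p - X i)) ≃+*
      MvPolynomial (Fin n) (ZMod p) ⧸ RingHom.ker φ :=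
    Ideal.quotEquivOfEq (by rw [hker, myI])
  exact ⟨e2.trans e1⟩
end

section
/- Let S be a nonempty finite type. The functor Hom_BoolRing((S → Bool), −) : BoolRing ⥤ Type (the coyoneda functor at the Boolean ring of Bool-valued functions on S) preserves colimits of shape J for every small filtered category J. -/
open CategoryTheory CategoryTheory.Limits

/-- Functions into a Boolean ring form a Boolean ring under pointwise operations. -/
instance Pi.instBooleanRing {ι : Type*} (α : ι → Type*) [∀ i, BooleanRing (α i)] :
    BooleanRing (∀ i, α i) :=
  { (inferInstance : Ring (∀ i, α i)) with
    isIdempotentElem := fun a => funext fun i => BooleanRing.mul_self (a i) }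

namespace BoolRingCompactAux

variable {S : Type} [Fintype S] [DecidableEq S]

@[simp] lemma bool_zero : (0 : Bool) = false := rfl
@[simp] lemma bool_one : (1 : Bool) = true := rfl
@[simp] lemma bool_mul (a b : Bool) : a * b = (a && b) := rfl
@[simp] lemma bool_add (a b : Bool) : a + b = xor a b := rfl

/-- indicator function -/
def delta (s : S) : S → Bool := fun t => decide (t = s)

lemma sum_delta_eq (f : S → Bool) : ∑ s, (if f s then delta s else 0) = f := by
  funext t
  rw [Finset.sum_apply]
  rw [Finset.sum_eq_single t]
  · cases h : f t <;> simp [h, delta]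
  · intro s _ hst
    cases h : f s <;> simp [h, delta, Ne.symm hst]
  · simp

lemma sum_delta : ∑ s : S, delta s = (1 : S → Bool) := by
  have := sum_delta_eq (S := S) 1
  simpa using this

omit [Fintype S] in
lemma delta_mul_delta {s t : S} (h : s ≠ t) : delta s * delta t = (0 : S → Bool) := by
  funext u
  simp only [Pi.mul_apply, delta, Pi.zero_apply]
  by_cases hu : u = s <;> by_cases hv : u = t <;>
    simp [hu, hv, h, Ne.symm h]

lemma ringHom_ext {R : Type*} [NonAssocSemiring R] {φ ψ : (S → Bool) →+* R}
    (h : ∀ s, φ (delta s) = ψ (delta s)) : φ = ψ := by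
  refine RingHom.ext fun f => ?_
  rw [← sum_delta_eq f, map_sum, map_sum]
  refine Finset.sum_congr rfl fun s _ => ?_
  rw [apply_ite φ, apply_ite ψ, map_zero, map_zero, h s]

/-- Construct a ring hom from orthogonal idempotents summing to 1. -/
def mkHom {R : Type*} [BooleanRing R] (e : S → R)
    (horth : ∀ s t, s ≠ t → e s * e t = 0) (hsum : ∑ s, e s = 1) :
    (S → Bool) →+* R where
  toFun f := ∑ s, if f s then e s else 0
  map_one' := by simpa using hsum
  map_zero' := by simp
  map_mul' f g := by
    rw [Finset.sum_mul_sum]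
    refine Finset.sum_congr rfl fun s _ => ?_
    rw [Finset.sum_eq_single s]
    · cases h1 : f s <;> cases h2 : g s <;>
        simp [h1, h2, Pi.mul_apply, BooleanRing.mul_self]
    · intro t _ hts
      cases h1 : f s <;> cases h2 : g t <;> simp [h1, h2, horth s t (Ne.symm hts)]
    · simp
  map_add' f g := by
    rw [← Finset.sum_add_distrib]
    refine Finset.sum_congr rfl fun s _ => ?_
    cases h1 : f s <;> cases h2 : g s <;>
      simp [h1, h2, Pi.add_apply, BooleanRing.add_self]

lemma mkHom_delta {R : Type*} [BooleanRing R] (e : S → R)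
    (horth : ∀ s t, s ≠ t → e s * e t = 0) (hsum : ∑ s, e s = 1) (s : S) :
    mkHom e horth hsum (delta s) = e s := by
  simp only [mkHom, RingHom.coe_mk, MonoidHom.coe_mk, OneHom.coe_mk, delta]
  simp only [decide_eq_true_eq]
  simp [Finset.sum_ite_eq' Finset.univ s e]


/-- In a filtered concrete colimit, finitely many equalities of images can be realized at
a single finite stage. -/
lemma exists_map_eq {J : Type} [SmallCategory J] [IsFiltered J] (D : J ⥤ CommRingCat)
    {T : J} :
    ∀ l : List (D.obj T × D.obj T),
      (∀ p ∈ l, colimit.ι D T p.1 = colimit.ι D T p.2) →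
      ∃ (k : J) (h : T ⟶ k), ∀ p ∈ l, D.map h p.1 = D.map h p.2
  | [], _ => ⟨T, 𝟙 T, by simp⟩
  | p :: l, hl => by
    obtain ⟨k1, h1, H1⟩ := exists_map_eq D l fun q hq => hl q (List.mem_cons_of_mem _ hq)
    obtain ⟨k2, f, g, hfg⟩ :=
      Limits.Concrete.colimit_exists_of_rep_eq D p.1 p.2 (hl p List.mem_cons_self)
    let h2 : T ⟶ IsFiltered.coeq f g := f ≫ IsFiltered.coeqHom f g
    have H2 : D.map h2 p.1 = D.map h2 p.2 := by
      have hc : h2 = g ≫ IsFiltered.coeqHom f g := IsFiltered.coeq_condition f g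
      conv_rhs => rw [hc]
      simp only [h2, Functor.map_comp, CommRingCat.comp_apply, hfg]
    -- combine h1 and h2
    let K := IsFiltered.max k1 (IsFiltered.coeq f g)
    let m1 : T ⟶ K := h1 ≫ IsFiltered.leftToMax _ _
    let m2 : T ⟶ K := h2 ≫ IsFiltered.rightToMax _ _
    let w := IsFiltered.coeqHom m1 m2
    refine ⟨IsFiltered.coeq m1 m2, m1 ≫ w, ?_⟩
    intro q hq'
    rcases List.mem_cons.mp hq' with rfl | hq
    · have : D.map (m1 ≫ w) = D.map (m2 ≫ w) := by rw [IsFiltered.coeq_condition]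
      rw [this]
      simp only [m2, Category.assoc, Functor.map_comp, CommRingCat.comp_apply, H2]
    · simp only [m1, Category.assoc, Functor.map_comp, CommRingCat.comp_apply, H1 q hq]

end BoolRingCompactAux

namespace BoolRingCompactAux

instance instFunLikeBR (X Y : BoolRing) : FunLike (X ⟶ Y) X Y where
  coe f := f.hom
  coe_injective f g h := BoolRing.hom_ext (DFunLike.coe_injective h)

instance instRingHomClassBR (X Y : BoolRing) : RingHomClass (X ⟶ Y) X Y where
  map_mul f := f.hom.map_mul
  map_one f := f.hom.map_one
  map_add f := f.hom.map_add
  map_zero f := f.hom.map_zero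

lemma br_comp_apply {X Y Z : BoolRing} (f : X ⟶ Y) (g : Y ⟶ Z) (x : X) :
    (f ≫ g) x = g (f x) := rfl

end BoolRingCompactAux

open BoolRingCompactAux in
/-- For a nonempty finite type `S`, the coyoneda functor at the Boolean ring `S → Bool`
preserves filtered colimits. -/
theorem coyoneda_boolRing_preserves_filtered_colimits
    (S : Type) [Finite S] [Nonempty S] (J : Type) [SmallCategory J] [IsFiltered J] :
    PreservesColimitsOfShape J
      (coyoneda.obj (Opposite.op (BoolRing.of (S → Bool)))) := by
  cases nonempty_fintype S
  letI := Classical.decEq S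
  letI := Classical.decEq J
  constructor
  intro K
  let D : J ⥤ CommRingCat := K ⋙ forget₂ BoolRing CommRingCat
  letI bri : BooleanRing ↥(colimit D) :=
    { (inferInstance : Ring ↥(colimit D)) with
      isIdempotentElem := fun x => by
        obtain ⟨j, y, rfl⟩ := Limits.Concrete.colimit_exists_rep D x
        show _ * _ = _
        rw [← map_mul]
        exact congrArg _ (BooleanRing.mul_self (α := ↥(K.obj j)) y) }
  let c : Cocone K :=
    { pt := BoolRing.of ↥(colimit D)
      ι :=
        { app := fun j => ConcreteCategory.ofHom (C := BoolRing) ((colimit.ι D j).hom : ↥(K.obj j) →+* ↥(colimit D))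
          naturality := fun j j' f => by
            refine BoolRing.hom_ext (RingHom.ext fun x => ?_)
            exact colimit.w_apply D f x }  }
  let sc : Cocone K → Cocone D := fun s =>
    { pt := CommRingCat.of s.pt
      ι :=
        { app := fun j => ConcreteCategory.ofHom (C := CommRingCat) ((s.ι.app j).hom : ↥(K.obj j) →+* ↥(s.pt))
          naturality := fun j j' f => by
            refine CommRingCat.hom_ext (RingHom.ext fun x => ?_)
            exact DFunLike.congr_fun (s.ι.naturality f) (show ↥(K.obj j) from x) } }
  have hc : IsColimit c :=
    { desc := fun s => ConcreteCategory.ofHom (C := BoolRing) ((colimit.desc D (sc s)).hom : ↥(colimit D) →+* ↥(s.pt))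
      fac := fun s j => by
        refine BoolRing.hom_ext (RingHom.ext fun x => ?_)
        exact ConcreteCategory.congr_hom (colimit.ι_desc (sc s) j) x
      uniq := fun s m hm => by
        refine BoolRing.hom_ext (RingHom.ext fun x => ?_)
        obtain ⟨j, y, rfl⟩ := Limits.Concrete.colimit_exists_rep D x
        have h1 : m (colimit.ι D j y) = s.ι.app j (show ↥(K.obj j) from y) :=
          DFunLike.congr_fun (hm j) (show ↥(K.obj j) from y)
        have h2 : colimit.desc D (sc s) (colimit.ι D j y)
            = s.ι.app j (show ↥(K.obj j) from y) :=
          ConcreteCategory.congr_hom (colimit.ι_desc (sc s) j) y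
        exact h1.trans h2.symm }
  have hc' : IsColimit ((coyoneda.obj (Opposite.op (BoolRing.of (S → Bool)))).mapCocone c) := by
    refine Types.FilteredColimit.isColimitOf _ _ ?_ ?_
    · -- joint surjectivity
      intro φ0
      let φ : BoolRing.of (S → Bool) ⟶ c.pt := φ0
      have hrep : ∀ s : S, ∃ (j : J) (y : D.obj j), colimit.ι D j y = φ (delta s) :=
        fun s => Limits.Concrete.colimit_exists_rep D (φ (delta s))
      choose jj yy hyy using hrep
      obtain ⟨T, hT⟩ := IsFiltered.sup_objs_exists (Finset.univ.image jj)
      have hTmor : ∀ s, Nonempty (jj s ⟶ T) := fun s =>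
        hT (Finset.mem_image_of_mem jj (Finset.mem_univ s))
      let e : S → D.obj T := fun s => D.map (hTmor s).some (yy s)
      have he : ∀ s, colimit.ι D T (e s) = φ (delta s) := fun s =>
        (colimit.w_apply D (hTmor s).some (yy s)).trans (hyy s)
      let l : List (D.obj T × D.obj T) :=
        (∑ s : S, e s, (1 : D.obj T)) ::
          ((Finset.univ : Finset (S × S)).toList.map fun p =>
            if p.1 = p.2 then ((0 : D.obj T), (0 : D.obj T)) else (e p.1 * e p.2, 0))
      have hl : ∀ p ∈ l, colimit.ι D T p.1 = colimit.ι D T p.2 := by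
        intro p hp
        rcases List.mem_cons.mp hp with rfl | hp
        · show colimit.ι D T (∑ s : S, e s) = colimit.ι D T 1
          rw [map_sum, map_one]
          calc (∑ s : S, colimit.ι D T (e s)) = ∑ s : S, φ (delta s) :=
                Finset.sum_congr rfl fun s _ => he s
            _ = φ (∑ s : S, delta s) := (map_sum φ _ _).symm
            _ = φ 1 := DFunLike.congr_arg φ sum_delta
            _ = 1 := map_one φ.hom
        · obtain ⟨p', _, rfl⟩ := List.mem_map.mp hp
          by_cases hd : p'.1 = p'.2
          · simp [hd]
          · rw [if_neg hd]
            show colimit.ι D T (e p'.1 * e p'.2) = colimit.ι D T 0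
            calc colimit.ι D T (e p'.1 * e p'.2)
                = colimit.ι D T (e p'.1) * colimit.ι D T (e p'.2) := map_mul _ _ _
              _ = φ (delta p'.1) * φ (delta p'.2) := by rw [he, he]
              _ = φ (delta p'.1 * delta p'.2) := (map_mul φ.hom _ _).symm
              _ = φ 0 := DFunLike.congr_arg φ (delta_mul_delta hd)
              _ = 0 := map_zero φ
              _ = colimit.ι D T 0 := (map_zero _).symm
      obtain ⟨k, h, hk⟩ := BoolRingCompactAux.exists_map_eq D l hl
      let e' : S → ↥(K.obj k) := fun s => show ↥(K.obj k) from D.map h (e s)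
      have horth : ∀ s t, s ≠ t → e' s * e' t = 0 := by
        intro s t hst
        have hmem := hk _ (List.mem_cons_of_mem _ (List.mem_map.mpr
          ⟨(s, t), Finset.mem_toList.mpr (Finset.mem_univ _), rfl⟩))
        rw [if_neg hst] at hmem
        show D.map h (e s) * D.map h (e t) = (0 : D.obj k)
        rw [← map_mul]
        exact hmem.trans (map_zero _)
      have hsum' : ∑ s, e' s = 1 := by
        have h1 : D.map h (∑ s : S, e s) = D.map h 1 := hk _ List.mem_cons_self
        show (∑ s : S, D.map h (e s)) = (1 : D.obj k)
        rw [← map_sum]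
        exact h1.trans (map_one _)
      refine ⟨k, ConcreteCategory.ofHom (C := BoolRing) (X := BoolRing.of (S → Bool)) (Y := K.obj k) (mkHom e' horth hsum'), ?_⟩
      show φ = ConcreteCategory.ofHom (C := BoolRing) (X := BoolRing.of (S → Bool)) (Y := K.obj k) (mkHom e' horth hsum') ≫ c.ι.app k
      refine BoolRing.hom_ext (ringHom_ext fun s => ?_)
      show φ (delta s) = colimit.ι D k (mkHom e' horth hsum' (delta s))
      rw [mkHom_delta]
      show φ (delta s) = colimit.ι D k (D.map h (e s))
      rw [colimit.w_apply, he s]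
    · -- eventual equality
      intro i j' φi0 φj0 hij0
      let φi : BoolRing.of (S → Bool) ⟶ K.obj i := φi0
      let φj : BoolRing.of (S → Bool) ⟶ K.obj j' := φj0
      have hij : φi ≫ c.ι.app i = φj ≫ c.ι.app j' := hij0
      let T := IsFiltered.max i j'
      let u : i ⟶ T := IsFiltered.leftToMax i j'
      let v : j' ⟶ T := IsFiltered.rightToMax i j'
      let l : List (D.obj T × D.obj T) :=
        (Finset.univ : Finset S).toList.map fun s =>
          ((show ↥(D.obj T) from K.map u (φi (delta s))),
            (show ↥(D.obj T) from K.map v (φj (delta s))))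
      have hl : ∀ p ∈ l, colimit.ι D T p.1 = colimit.ι D T p.2 := by
        intro p hp
        obtain ⟨s, _, rfl⟩ := List.mem_map.mp hp
        have h1 : colimit.ι D T (show ↥(D.obj T) from K.map u (φi (delta s)))
            = colimit.ι D i (φi (delta s)) := colimit.w_apply D u _
        have h2 : colimit.ι D T (show ↥(D.obj T) from K.map v (φj (delta s)))
            = colimit.ι D j' (φj (delta s)) := colimit.w_apply D v _
        have h3 : colimit.ι D i (φi (delta s)) = colimit.ι D j' (φj (delta s)) :=
          DFunLike.congr_fun hij (delta s)
        exact h1.trans (h3.trans h2.symm)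
      obtain ⟨k, h, hk⟩ := BoolRingCompactAux.exists_map_eq D l hl
      refine ⟨k, u ≫ h, v ≫ h, ?_⟩
      show φi ≫ K.map (u ≫ h) = φj ≫ K.map (v ≫ h)
      refine BoolRing.hom_ext (ringHom_ext fun s => ?_)
      have hs := hk _ (List.mem_map.mpr ⟨s, Finset.mem_toList.mpr (Finset.mem_univ s), rfl⟩)
      show K.map (u ≫ h) (φi (delta s)) = K.map (v ≫ h) (φj (delta s))
      rw [Functor.map_comp, Functor.map_comp, br_comp_apply, br_comp_apply]
      exact hs
  exact preservesColimit_of_preserves_colimit_cocone hc hc'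
end

section
/- Let S be a nonempty finite type and let J be any small sifted category. The functor Hom_BoolRing((S → Bool), −) : BoolRing ⥤ Type preserves colimits of shape J. That is, (S → Bool) is a compact 1-projective object of the category of Boolean rings. -/
open CategoryTheory CategoryTheory.Limits

set_option linter.unusedSectionVars false


namespace SiftedBR

variable {J : Type} [SmallCategory J]

section Ext
variable (F G : J ⥤ Type)

/-- External product of two `Type`-valued diagrams. -/
@[simps] def extProd : J × J ⥤ Type where
  obj p := F.obj p.1 × G.obj p.2
  map f := ↾(Prod.map (F.map f.1) (G.map f.2))
  map_id p := by refine ConcreteCategory.ext_apply fun x => ?_; simp; rfl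
  map_comp f g := by refine ConcreteCategory.ext_apply fun x => ?_; simp; rfl

variable {F G} (cF : Cocone F) (cG : Cocone G)

/-- The product cocone over the external product. -/
@[simps] def extCocone : Cocone (extProd F G) where
  pt := cF.pt × cG.pt
  ι := { app := fun p => ↾(fun (q : F.obj p.1 × G.obj p.2) => (cF.ι.app p.1 q.1, cG.ι.app p.2 q.2))
         naturality := fun p p' f => by
           refine ConcreteCategory.ext_apply fun q => ?_
           obtain ⟨a, b⟩ := q
           have h1 := types_congr_hom (cF.w f.1) a
           have h2 := types_congr_hom (cG.w f.2) b
           simp only [types_comp_apply] at h1 h2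
           exact Prod.ext h1 h2 }

variable {cF cG}

/-- Double descent: the product of two colimit cocones is a colimit over the
product category. -/
noncomputable def extIsColimit (hF : IsColimit cF) (hG : IsColimit cG) :
    IsColimit (extCocone cF cG) := by
  -- inner cocone
  have innerNat : ∀ (s : Cocone (extProd F G)) (j : J) (x : F.obj j),
      ∀ {k k' : J} (g : k ⟶ k') (y : G.obj k),
        s.ι.app (j, k') (x, G.map g y) = s.ι.app (j, k) (x, y) := by
    intro s j x k k' g y
    have := types_congr_hom (s.ι.naturality ((𝟙 j, g) : (j, k) ⟶ (j, k'))) (x, y)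
    simp only [types_comp_apply, extProd_map, Prod.map, Functor.map_id] at this
    rw [CategoryTheory.Functor.map_id] at this
    exact this
  have outerNat : ∀ (s : Cocone (extProd F G)) {j j' : J} (f : j ⟶ j') (x : F.obj j)
      (k : J) (y : G.obj k),
        s.ι.app (j', k) (F.map f x, y) = s.ι.app (j, k) (x, y) := by
    intro s j j' f x k y
    have := types_congr_hom (s.ι.naturality ((f, 𝟙 k) : (j, k) ⟶ (j', k))) (x, y)
    simp only [types_comp_apply, extProd_map, Prod.map, Functor.map_id] at this
    rw [CategoryTheory.Functor.map_id] at this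
    exact this
  let inner : ∀ (s : Cocone (extProd F G)) (j : J) (x : F.obj j), Cocone G := fun s j x =>
    { pt := s.pt
      ι := { app := fun k => ↾(fun (y : G.obj k) => s.ι.app (j, k) (x, y))
             naturality := fun k k' g => by
               refine ConcreteCategory.ext_apply fun y => ?_
               simp only [types_comp_apply, Functor.const_obj_map, types_id_apply]
               exact innerNat s j x g y } }
  let outer : ∀ (s : Cocone (extProd F G)), Cocone F := fun s =>
    { pt := cG.pt ⟶ s.pt
      ι := { app := fun j => ↾(fun (x : F.obj j) => hG.desc (inner s j x))
             naturality := fun j j' f => by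
               refine ConcreteCategory.ext_apply fun x => ?_
               simp only [types_comp_apply, Functor.const_obj_map, types_id_apply]
               apply hG.hom_ext
               intro k
               refine ConcreteCategory.ext_apply fun y => ?_
               have h1 := types_congr_hom (hG.fac (inner s j' (F.map f x)) k) y
               have h2 := types_congr_hom (hG.fac (inner s j x) k) y
               simp only [types_comp_apply, TypeCat.ofHom_apply, types_id_apply] at h1 h2 ⊢
               rw [h1]; refine Eq.trans ?_ h2.symm
               exact outerNat s f x k y } }
  refine { desc := fun s => ↾(fun (q : cF.pt × cG.pt) => hF.desc (outer s) q.1 q.2), fac := ?_, uniq := ?_ }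
  · intro s p
    refine ConcreteCategory.ext_apply fun q => ?_
    obtain ⟨x, y⟩ := q
    have h1 := types_congr_hom (hF.fac (outer s) p.1) x
    simp only [types_comp_apply, TypeCat.ofHom_apply] at h1 ⊢
    simp only [extCocone_ι_app]
    show hF.desc (outer s) (cF.ι.app p.1 x) (cG.ι.app p.2 y) = s.ι.app p (x, y)
    rw [h1]
    have h2 := types_congr_hom (hG.fac (inner s p.1 x) p.2) y
    exact h2
  · intro s m hm
    refine ConcreteCategory.ext_apply fun q => ?_
    obtain ⟨a, b⟩ := q
    obtain ⟨j, x, rfl⟩ := Types.jointly_surjective F hF a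
    obtain ⟨k, y, rfl⟩ := Types.jointly_surjective G hG b
    have h1 := types_congr_hom (hm (j, k)) (x, y)
    simp only [types_comp_apply, extCocone_ι_app] at h1
    refine Eq.trans h1 ?_
    show _ = hF.desc (outer s) (cF.ι.app j x) (cG.ι.app k y)
    have h2 := types_congr_hom (hF.fac (outer s) j) x
    simp only [types_comp_apply] at h2
    rw [h2]
    have h3 := types_congr_hom (hG.fac (inner s j x) k) y
    simp only [types_comp_apply] at h3
    exact h3.symm

end Ext



section Sifted
variable [IsSifted J]

lemma exists_cospan (j k : J) : ∃ m : J, Nonempty ((j ⟶ m) × (k ⟶ m)) := by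
  have : IsConnected (StructuredArrow (j, k) (Functor.diag J)) :=
    Functor.Final.out (j, k)
  obtain ⟨a⟩ := (inferInstance : Nonempty (StructuredArrow (j, k) (Functor.diag J)))
  exact ⟨a.right, ⟨(a.hom.1, a.hom.2)⟩⟩

end Sifted

section Pow
variable (K : J ⥤ Type)

@[simps] def powD (n : ℕ) : J ⥤ Type where
  obj j := Fin n → K.obj j
  map {j j'} f := ↾(fun (v : Fin n → K.obj j) i => K.map f (v i))
  map_id j := by refine ConcreteCategory.ext_apply fun v => ?_; simp
  map_comp f g := by refine ConcreteCategory.ext_apply fun v => ?_; simp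

variable {K} (c : Cocone K)

@[simps] def powCocone (n : ℕ) : Cocone (powD K n) where
  pt := Fin n → c.pt
  ι := { app := fun j => ↾(fun (v : Fin n → K.obj j) i => c.ι.app j (v i))
         naturality := fun j j' f => by
           refine ConcreteCategory.ext_apply fun v => ?_
           simp only [types_comp_apply, Functor.const_obj_map, types_id_apply, powD_map]
           funext i
           exact types_congr_hom (c.w f) (v i) }

variable [IsSifted J] {c}

noncomputable def powIsColimit (h : IsColimit c) : ∀ n, IsColimit (powCocone c n)
  | 0 => by
    have mapzero : ∀ {j j' : J} (f : j ⟶ j') (v : Fin 0 → K.obj j),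
        (powD K 0).map f v = Fin.elim0 := fun f v => funext fun i => i.elim0
    have const : ∀ (s : Cocone (powD K 0)) (j j' : J),
        s.ι.app j Fin.elim0 = s.ι.app j' Fin.elim0 := by
      intro s
      apply constant_of_preserves_morphisms
      intro j j' f
      have h := types_congr_hom (s.w f) Fin.elim0
      change s.ι.app j' ((powD K 0).map f Fin.elim0) = s.ι.app j Fin.elim0 at h
      rw [mapzero] at h
      exact h.symm
    refine { desc := fun s => ↾(fun (_ : Fin 0 → c.pt) => s.ι.app (Classical.arbitrary J) Fin.elim0),
             fac := ?_, uniq := ?_ }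
    · intro s j
      refine ConcreteCategory.ext_apply fun v => ?_
      simp only [types_comp_apply]
      have hv : v = Fin.elim0 := funext fun i => i.elim0
      show s.ι.app (Classical.arbitrary J) Fin.elim0 = s.ι.app j v
      rw [hv]
      exact const s _ j
    · intro s m hm
      refine ConcreteCategory.ext_apply fun v => ?_
      have hv : v = (powCocone c 0).ι.app (Classical.arbitrary J) Fin.elim0 :=
        funext fun i => i.elim0
      rw [hv]
      have := types_congr_hom (hm (Classical.arbitrary J)) Fin.elim0
      exact this
  | (n + 1) => by
    have hn := powIsColimit h n
    -- binary product of `c` and `powCocone c n`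
    have hbin : IsColimit ((extCocone c (powCocone c n)).whisker (Functor.diag J)) :=
      (Functor.Final.isColimitWhiskerEquiv (Functor.diag J) _).symm (extIsColimit h hn)
    -- transport along the iso of diagrams
    let w : (Functor.diag J ⋙ extProd K (powD K n)) ≅ powD K (n + 1) :=
      NatIso.ofComponents
        (fun j => Equiv.toIso
          { toFun := fun q => Fin.cons q.1 q.2
            invFun := fun v => (v 0, fun i => v i.succ)
            left_inv := fun q => rfl
            right_inv := fun v => Fin.cons_self_tail v })
        (fun {j j'} f => by
          refine ConcreteCategory.ext_apply fun q => ?_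
          obtain ⟨x, v⟩ := q
          funext i
          refine Fin.cases ?_ ?_ i <;> intros <;> rfl)
    refine (IsColimit.equivOfNatIsoOfIso w ((extCocone c (powCocone c n)).whisker (Functor.diag J)) (powCocone c (n + 1))
      (Cocones.ext (Equiv.toIso
        { toFun := fun q : c.pt × (Fin n → c.pt) => (Fin.cons q.1 q.2 : Fin (n+1) → c.pt)
          invFun := fun v => (v 0, fun i => v i.succ)
          left_inv := fun q => rfl
          right_inv := fun v => Fin.cons_self_tail v }) ?_)).toFun hbin
    intro j
    refine ConcreteCategory.ext_apply fun q => ?_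
    simp only [Cocone.precompose_obj_ι, NatTrans.comp_app, types_comp_apply]
    funext i
    refine Fin.cases ?_ ?_ i <;>
      intros <;> rfl

end Pow


instance (X : BoolRing.{0}) : BooleanRing ((forget BoolRing).obj X) := X.booleanRing

section RingColim
variable [IsSifted J] (D : J ⥤ BoolRing.{0})

/-- A morphism of `BoolRing`s as a ring hom. -/
noncomputable abbrev dmap {j j' : J} (f : j ⟶ j') : ↥(D.obj j) →+* ↥(D.obj j') := ConcreteCategory.hom (D.map f)

/-- The underlying `Type`-valued diagram. -/
noncomputable abbrev KD : J ⥤ Type := D ⋙ forget BoolRing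

noncomputable instance (j : J) : BooleanRing ((KD D).obj j) :=
  inferInstanceAs (BooleanRing ↥(D.obj j))

/-- The underlying type of the colimit. -/
noncomputable def TT : Type := colimit (KD D)

/-- Structure maps into the colimit. -/
noncomputable def tι (j : J) : ↥(D.obj j) → TT D := colimit.ι (KD D) j

lemma tι_w {j j' : J} (f : j ⟶ j') (x : ↥(D.obj j)) :
    tι D j' (dmap D f x) = tι D j x :=
  types_congr_hom (colimit.w (KD D) f) x

lemma rep1 (a : TT D) : ∃ j x, a = tι D j x := by
  obtain ⟨j, x, hx⟩ := Types.jointly_surjective' (F := KD D) a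
  exact ⟨j, x, hx.symm⟩

lemma rep2 (a b : TT D) : ∃ j x y, a = tι D j x ∧ b = tι D j y := by
  obtain ⟨j, x, rfl⟩ := rep1 D a
  obtain ⟨k, y, rfl⟩ := rep1 D b
  obtain ⟨m, ⟨f, g⟩⟩ := exists_cospan j k
  exact ⟨m, dmap D f x, dmap D g y, (tι_w D f x).symm, (tι_w D g y).symm⟩

lemma rep3 (a b c : TT D) :
    ∃ j x y z, a = tι D j x ∧ b = tι D j y ∧ c = tι D j z := by
  obtain ⟨j, x, y, rfl, rfl⟩ := rep2 D a b
  obtain ⟨k, z, rfl⟩ := rep1 D c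
  obtain ⟨m, ⟨f, g⟩⟩ := exists_cospan j k
  exact ⟨m, dmap D f x, dmap D f y, dmap D g z,
    (tι_w D f x).symm, (tι_w D f y).symm, (tι_w D g z).symm⟩

/-- The binary-product colimit used to define the ring operations. -/
noncomputable def binColim :
    IsColimit ((extCocone (colimit.cocone (KD D)) (colimit.cocone (KD D))).whisker
      (Functor.diag J)) :=
  (Functor.Final.isColimitWhiskerEquiv (Functor.diag J) _).symm
    (extIsColimit (colimit.isColimit (KD D)) (colimit.isColimit (KD D)))

/-- The cocone used to define multiplication. -/
noncomputable def mulCocone : Cocone (Functor.diag J ⋙ extProd (KD D) (KD D)) where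
  pt := TT D
  ι := { app := fun j => ↾(fun (q : (KD D).obj j × (KD D).obj j) => tι D j ((show ↥(D.obj j) from q.1) * (show ↥(D.obj j) from q.2)))
         naturality := fun j j' f => by
           refine ConcreteCategory.ext_apply fun q => ?_
           obtain ⟨x, y⟩ := q
           let x' : ↥(D.obj j) := x
           let y' : ↥(D.obj j) := y
           show tι D j' (dmap D f x' * dmap D f y') = tι D j (x' * y')
           calc tι D j' (dmap D f x' * dmap D f y')
               = tι D j' (dmap D f (x' * y')) :=
                 congrArg (tι D j') (map_mul (dmap D f) x' y').symm
             _ = tι D j (x' * y') := tι_w D f _ }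

/-- The cocone used to define addition. -/
noncomputable def addCocone : Cocone (Functor.diag J ⋙ extProd (KD D) (KD D)) where
  pt := TT D
  ι := { app := fun j => ↾(fun (q : (KD D).obj j × (KD D).obj j) => tι D j ((show ↥(D.obj j) from q.1) + (show ↥(D.obj j) from q.2)))
         naturality := fun j j' f => by
           refine ConcreteCategory.ext_apply fun q => ?_
           obtain ⟨x, y⟩ := q
           let x' : ↥(D.obj j) := x
           let y' : ↥(D.obj j) := y
           show tι D j' (dmap D f x' + dmap D f y') = tι D j (x' + y')
           calc tι D j' (dmap D f x' + dmap D f y')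
               = tι D j' (dmap D f (x' + y')) :=
                 congrArg (tι D j') (map_add (dmap D f) x' y').symm
             _ = tι D j (x' + y') := tι_w D f _ }

noncomputable def tmul : TT D → TT D → TT D := fun a b => (binColim D).desc (mulCocone D) (a, b)
noncomputable def tadd : TT D → TT D → TT D := fun a b => (binColim D).desc (addCocone D) (a, b)

lemma tmul_spec (j : J) (x y : ↥(D.obj j)) :
    tmul D (tι D j x) (tι D j y) = tι D j (x * y) := by
  have h := types_congr_hom ((binColim D).fac (mulCocone D) j) (x, y)
  simp only [types_comp_apply] at h
  exact h

lemma tadd_spec (j : J) (x y : ↥(D.obj j)) :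
    tadd D (tι D j x) (tι D j y) = tι D j (x + y) := by
  have h := types_congr_hom ((binColim D).fac (addCocone D) j) (x, y)
  simp only [types_comp_apply] at h
  exact h

noncomputable def tone : TT D := tι D (Classical.arbitrary J) 1
noncomputable def tzero : TT D := tι D (Classical.arbitrary J) 0

lemma tι_one (j : J) : tι D j 1 = tone D := by
  refine constant_of_preserves_morphisms (fun j => tι D j (1 : ↥(D.obj j))) ?_ j _
  intro j j' f
  exact (tι_w D f 1).symm.trans (congrArg (tι D j') (map_one (dmap D f)))

lemma tι_zero (j : J) : tι D j 0 = tzero D := by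
  refine constant_of_preserves_morphisms (fun j => tι D j (0 : ↥(D.obj j))) ?_ j _
  intro j j' f
  exact (tι_w D f 0).symm.trans (congrArg (tι D j') (map_zero (dmap D f)))

lemma tadd_assoc (a b c : TT D) : tadd D (tadd D a b) c = tadd D a (tadd D b c) := by
  obtain ⟨j, x, y, z, rfl, rfl, rfl⟩ := rep3 D a b c
  rw [tadd_spec, tadd_spec, tadd_spec, tadd_spec, add_assoc]

lemma tadd_comm (a b : TT D) : tadd D a b = tadd D b a := by
  obtain ⟨j, x, y, rfl, rfl⟩ := rep2 D a b
  rw [tadd_spec, tadd_spec, add_comm]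

lemma tzero_tadd (a : TT D) : tadd D (tzero D) a = a := by
  obtain ⟨j, x, rfl⟩ := rep1 D a
  rw [← tι_zero D j, tadd_spec, zero_add]

lemma tadd_tzero (a : TT D) : tadd D a (tzero D) = a := by
  obtain ⟨j, x, rfl⟩ := rep1 D a
  rw [← tι_zero D j, tadd_spec, add_zero]

lemma tadd_self (a : TT D) : tadd D a a = tzero D := by
  obtain ⟨j, x, rfl⟩ := rep1 D a
  rw [tadd_spec, BooleanRing.add_self, tι_zero]

lemma tmul_assoc (a b c : TT D) : tmul D (tmul D a b) c = tmul D a (tmul D b c) := by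
  obtain ⟨j, x, y, z, rfl, rfl, rfl⟩ := rep3 D a b c
  rw [tmul_spec, tmul_spec, tmul_spec, tmul_spec, mul_assoc]

lemma tone_tmul (a : TT D) : tmul D (tone D) a = a := by
  obtain ⟨j, x, rfl⟩ := rep1 D a
  rw [← tι_one D j, tmul_spec, one_mul]

lemma tmul_tone (a : TT D) : tmul D a (tone D) = a := by
  obtain ⟨j, x, rfl⟩ := rep1 D a
  rw [← tι_one D j, tmul_spec, mul_one]

lemma tleft_distrib (a b c : TT D) :
    tmul D a (tadd D b c) = tadd D (tmul D a b) (tmul D a c) := by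
  obtain ⟨j, x, y, z, rfl, rfl, rfl⟩ := rep3 D a b c
  rw [tadd_spec, tmul_spec, tmul_spec, tmul_spec, tadd_spec, left_distrib]

lemma tright_distrib (a b c : TT D) :
    tmul D (tadd D a b) c = tadd D (tmul D a c) (tmul D b c) := by
  obtain ⟨j, x, y, z, rfl, rfl, rfl⟩ := rep3 D a b c
  rw [tadd_spec, tmul_spec, tmul_spec, tmul_spec, tadd_spec, right_distrib]

lemma tzero_tmul (a : TT D) : tmul D (tzero D) a = tzero D := by
  obtain ⟨j, x, rfl⟩ := rep1 D a
  rw [← tι_zero D j, tmul_spec, zero_mul, tι_zero]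

lemma tmul_tzero (a : TT D) : tmul D a (tzero D) = tzero D := by
  obtain ⟨j, x, rfl⟩ := rep1 D a
  rw [← tι_zero D j, tmul_spec, mul_zero, tι_zero]

lemma tmul_self (a : TT D) : tmul D a a = a := by
  obtain ⟨j, x, rfl⟩ := rep1 D a
  rw [tmul_spec, BooleanRing.mul_self]

noncomputable instance : Add (TT D) := ⟨tadd D⟩
noncomputable instance : Mul (TT D) := ⟨tmul D⟩
noncomputable instance : One (TT D) := ⟨tone D⟩
noncomputable instance : Zero (TT D) := ⟨tzero D⟩
noncomputable instance : Neg (TT D) := ⟨fun a => a⟩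

noncomputable instance instBR : BooleanRing (TT D) where
  nsmul := nsmulRec
  zsmul := zsmulRec
  add := (· + ·)
  add_assoc := tadd_assoc D
  zero := 0
  zero_add := tzero_tadd D
  add_zero := tadd_tzero D
  add_comm := tadd_comm D
  neg := Neg.neg
  neg_add_cancel := tadd_self D
  mul := (· * ·)
  mul_assoc := tmul_assoc D
  one := 1
  one_mul := tone_tmul D
  mul_one := tmul_tone D
  left_distrib := tleft_distrib D
  right_distrib := tright_distrib D
  zero_mul := tzero_tmul D
  mul_zero := tmul_tzero D
  isIdempotentElem := tmul_self D

/-- The structure maps as ring homs. -/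
noncomputable def ringι (j : J) : ↥(D.obj j) →+* TT D where
  toFun := tι D j
  map_one' := by exact tι_one D j
  map_mul' x y := by exact (tmul_spec D j x y).symm
  map_zero' := by exact tι_zero D j
  map_add' x y := by exact (tadd_spec D j x y).symm


/-- The colimit cocone in `BoolRing`. -/
noncomputable def ringCocone : Cocone D where
  pt := BoolRing.of (TT D)
  ι := { app := fun j => (ConcreteCategory.ofHom (C := BoolRing) (ringι D j) : D.obj j ⟶ BoolRing.of (TT D))
         naturality := fun j j' f => by
           apply (forget BoolRing).map_injective
           refine ConcreteCategory.ext_apply fun x => ?_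
           show tι D j' (dmap D f x) = tι D j x
           exact tι_w D f x }

/-- The underlying function of the descended morphism. -/
noncomputable def dfun (s : Cocone D) : TT D → ↥(s.pt) :=
  ⇑(colimit.desc (KD D) ((forget BoolRing).mapCocone s))

/-- The structure map of the cocone `s`, as a ring hom. -/
noncomputable abbrev sHom (s : Cocone D) (j : J) : ↥(D.obj j) →+* ↥(s.pt) := ConcreteCategory.hom (s.ι.app j)

lemma desc_spec (s : Cocone D) (j : J) (x : ↥(D.obj j)) :
    dfun D s (tι D j x) = sHom D s j x :=
  types_congr_hom (colimit.ι_desc ((forget BoolRing).mapCocone s) j) x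

/-- The descended morphism out of the colimit. -/
noncomputable def descHom (s : Cocone D) : TT D →+* ↥(s.pt) where
  toFun := dfun D s
  map_one' := by
    show dfun D s (tone D) = 1
    rw [show tone D = tι D (Classical.arbitrary J) 1 from rfl, desc_spec,
      map_one (sHom D s (Classical.arbitrary J))]
  map_zero' := by
    show dfun D s (tzero D) = 0
    rw [show tzero D = tι D (Classical.arbitrary J) 0 from rfl, desc_spec,
      map_zero (sHom D s (Classical.arbitrary J))]
  map_mul' a b := by
    obtain ⟨j, x, y, rfl, rfl⟩ := rep2 D a b
    show dfun D s (tmul D (tι D j x) (tι D j y))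
      = dfun D s (tι D j x) * dfun D s (tι D j y)
    rw [tmul_spec, desc_spec, desc_spec, desc_spec, map_mul (sHom D s j)]
  map_add' a b := by
    obtain ⟨j, x, y, rfl, rfl⟩ := rep2 D a b
    show dfun D s (tadd D (tι D j x) (tι D j y))
      = dfun D s (tι D j x) + dfun D s (tι D j y)
    rw [tadd_spec, desc_spec, desc_spec, desc_spec, map_add (sHom D s j)]

/-- The cocone `ringCocone` is a colimit cocone. -/
noncomputable def ringIsColimit : IsColimit (ringCocone D) where
  desc s := (ConcreteCategory.ofHom (C := BoolRing) (descHom D s) : BoolRing.of (TT D) ⟶ s.pt)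
  fac s j := by
    apply (forget BoolRing).map_injective
    refine ConcreteCategory.ext_apply fun x => ?_
    exact desc_spec D s j x
  uniq s m hm := by
    apply (forget BoolRing).map_injective
    refine ConcreteCategory.ext_apply fun a => ?_
    obtain ⟨j, x, rfl⟩ := rep1 D a
    have h := types_congr_hom ((forget BoolRing).congr_map (hm j)) x
    have h2 : (forget BoolRing).map m (tι D j x) = sHom D s j x := h
    rw [h2]
    exact (desc_spec D s j x).symm

end RingColim

section Free

@[simp] lemma bool_zero : (0 : Bool) = false := rfl
@[simp] lemma bool_one : (1 : Bool) = true := rfl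
@[simp] lemma bool_mul (a b : Bool) : a * b = (a && b) := rfl
@[simp] lemma bool_add (a b : Bool) : a + b = xor a b := rfl

variable {R : Type} [BooleanRing R] {n : ℕ}

/-- The `i`-th coordinate function, an element of the free Boolean ring. -/
def pii (n : ℕ) (i : Fin n) : (Fin n → Bool) → Bool := fun x => x i

/-- The idempotent attached to a point `x` and a tuple `r`. -/
def eX (r : Fin n → R) (x : Fin n → Bool) : R :=
  ∏ i, (if x i then r i else 1 + r i)

lemma eX_sum (r : Fin n → R) : ∑ x : Fin n → Bool, eX r x = 1 := by
  have h := Finset.prod_univ_sum (fun _ : Fin n => (Finset.univ : Finset Bool))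
    (fun i b => if b then r i else 1 + r i)
  rw [Fintype.piFinset_univ] at h
  simp only [eX]
  rw [← h]
  refine Finset.prod_eq_one fun i _ => ?_
  rw [Fintype.sum_bool]
  simp only [if_true, Bool.false_eq_true, if_false]
  rw [add_comm 1 (r i), ← add_assoc, BooleanRing.add_self, zero_add]

lemma eX_mul_ne (r : Fin n → R) {x y : Fin n → Bool} (h : x ≠ y) :
    eX r x * eX r y = 0 := by
  rw [eX, eX, ← Finset.prod_mul_distrib]
  obtain ⟨i, hi⟩ := Function.ne_iff.mp h
  apply Finset.prod_eq_zero (Finset.mem_univ i)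
  cases hx : x i <;> cases hy : y i <;>
    simp only [hx, hy, Bool.false_eq_true, if_true, if_false]
  · exact absurd (hx.trans hy.symm) hi
  · rw [mul_comm]; exact BooleanRing.mul_one_add_self _
  · exact BooleanRing.mul_one_add_self _
  · exact absurd (hx.trans hy.symm) hi

lemma eX_mul_r (r : Fin n → R) (x : Fin n → Bool) (i : Fin n) :
    eX r x * r i = if x i then eX r x else 0 := by
  rw [eX, ← Finset.prod_erase_mul Finset.univ _ (Finset.mem_univ i), mul_assoc]
  cases hx : x i
  · simp only [hx, Bool.false_eq_true, if_false]
    rw [add_mul, one_mul, BooleanRing.mul_self, BooleanRing.add_self, mul_zero]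
  · simp only [hx, if_true]
    rw [BooleanRing.mul_self]

/-- The ring hom out of the free Boolean ring determined by a tuple `r`. -/
def theta (r : Fin n → R) : ((Fin n → Bool) → Bool) →+* R where
  toFun f := ∑ x : Fin n → Bool, if f x then eX r x else 0
  map_one' := by simp [eX_sum]
  map_zero' := by simp
  map_mul' f g := by
    rw [Finset.sum_mul_sum]
    symm
    refine Finset.sum_congr rfl fun x _ => ?_
    have hsingle : (∑ y : Fin n → Bool,
        (if f x then eX r x else 0) * (if g y then eX r y else 0))
        = (if f x then eX r x else 0) * (if g x then eX r x else 0) := by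
      refine Finset.sum_eq_single x ?_ ?_
      · intro y _ hyx
        split_ifs <;>
          simp [eX_mul_ne r (Ne.symm hyx)]
      · intro hx
        exact absurd (Finset.mem_univ x) hx
    rw [hsingle]
    have hfg : (f * g) x = (f x && g x) := rfl
    rw [hfg]
    cases hf : f x <;> cases hg : g x <;> simp [BooleanRing.mul_self]
  map_add' f g := by
    rw [← Finset.sum_add_distrib]
    refine Finset.sum_congr rfl fun x _ => ?_
    have hfg : (f + g) x = xor (f x) (g x) := rfl
    rw [hfg]
    cases hf : f x <;> cases hg : g x <;> simp
    exact (BooleanRing.add_self _).symm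

lemma theta_pi (r : Fin n → R) (i : Fin n) : theta r (pii n i) = r i := by
  show (∑ x : Fin n → Bool, if x i then eX r x else 0) = r i
  calc (∑ x : Fin n → Bool, if x i then eX r x else 0)
      = ∑ x : Fin n → Bool, eX r x * r i :=
        Finset.sum_congr rfl fun x _ => (eX_mul_r r x i).symm
    _ = (∑ x : Fin n → Bool, eX r x) * r i := (Finset.sum_mul _ _ _).symm
    _ = r i := by rw [eX_sum, one_mul]

lemma eX_pii_apply (x y : Fin n → Bool) :
    eX (pii n) x y = decide (x = y) := by
  have happ : eX (pii n) x y = ∏ i, (if x i then y i else !(y i)) := by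
    rw [eX, Finset.prod_apply]
    refine Finset.prod_congr rfl fun i _ => ?_
    cases hx : x i <;> simp [hx, pii, Pi.add_apply, Pi.one_apply]
  rw [happ]
  by_cases h : x = y
  · subst h
    rw [decide_eq_true (Eq.refl x)]
    refine Finset.prod_eq_one fun i _ => ?_
    cases hi : x i <;> simp [hi]
  · rw [decide_eq_false h, show (false : Bool) = (0 : Bool) from rfl]
    obtain ⟨i, hi⟩ := Function.ne_iff.mp h
    apply Finset.prod_eq_zero (Finset.mem_univ i)
    cases hx : x i <;> cases hy : y i <;>
      simp only [hx, hy, ne_eq, not_true_eq_false, not_false_eq_true] at hi ⊢ <;>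
      simp

lemma theta_id (n : ℕ) (f : (Fin n → Bool) → Bool) : theta (pii n) f = f := by
  funext y
  show (∑ x : Fin n → Bool, if f x then eX (pii n) x else 0) y = f y
  rw [Finset.sum_apply]
  have hterm : ∀ x : Fin n → Bool,
      (if f x then eX (pii n) x else 0) y = if f x then (decide (x = y) : Bool) else 0 := by
    intro x
    rw [apply_ite (fun F : (Fin n → Bool) → Bool => F y), Pi.zero_apply, eX_pii_apply]
  rw [Finset.sum_congr rfl fun x _ => hterm x]
  have hsingle : (∑ x : Fin n → Bool, if f x then (decide (x = y) : Bool) else 0)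
      = if f y then (decide (y = y) : Bool) else 0 := by
    refine Finset.sum_eq_single y ?_ ?_
    · intro x _ hxy
      rw [decide_eq_false hxy]
      split_ifs <;> rfl
    · intro hy
      exact absurd (Finset.mem_univ y) hy
  rw [hsingle, decide_eq_true (Eq.refl y)]
  cases hf : f y <;> simp

lemma theta_eval {n : ℕ} (φ : ((Fin n → Bool) → Bool) →+* R) :
    theta (fun i => φ (pii n i)) = φ := by
  refine RingHom.ext fun f => ?_
  conv_rhs => rw [← theta_id n f]
  show (∑ x : Fin n → Bool, if f x then eX (fun i => φ (pii n i)) x else 0)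
    = φ (∑ x : Fin n → Bool, if f x then eX (pii n) x else 0)
  rw [map_sum]
  refine Finset.sum_congr rfl fun x _ => Eq.symm ?_
  rw [apply_ite φ, map_zero]
  congr 1
  rw [eX, eX, map_prod]
  refine Finset.prod_congr rfl fun i _ => ?_
  rw [apply_ite φ, map_add, map_one]

end Free

section Assemble

open Opposite

/-- A morphism in `BoolRing` as a ring hom. -/
abbrev toRH {X Y : BoolRing.{0}} (f : X ⟶ Y) : ↥X →+* ↥Y := ConcreteCategory.hom f

/-- The free Boolean ring on `n` generators. -/
noncomputable def FreeB (n : ℕ) : BoolRing.{0} := BoolRing.of ((Fin n → Bool) → Bool)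

/-- The natural bijection `Hom(FreeB n, R) ≃ Rⁿ`. -/
noncomputable def homEquiv (n : ℕ) (R : BoolRing.{0}) :
    (FreeB n ⟶ R) ≃ (Fin n → ↥R) where
  toFun φ i := toRH φ (pii n i)
  invFun r := ConcreteCategory.ofHom (C := BoolRing) (theta r : ((Fin n → Bool) → Bool) →+* ↥R)
  left_inv φ := ConcreteCategory.ext (theta_eval (toRH φ))
  right_inv r := funext fun i => theta_pi r i

variable {J : Type} [SmallCategory J] [IsSifted J] (D : J ⥤ BoolRing.{0})

/-- The coyoneda functor at `FreeB n` sends `ringCocone` to a colimit cocone. -/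
noncomputable def freeMapIsColimit (n : ℕ) :
    IsColimit ((coyoneda.obj (op (FreeB n))).mapCocone (ringCocone D)) := by
  have hpow := powIsColimit (c := colimit.cocone (KD D)) (colimit.isColimit (KD D)) n
  let W : powD (KD D) n ≅ D ⋙ coyoneda.obj (op (FreeB n)) :=
    NatIso.ofComponents
      (fun j => Equiv.toIso (homEquiv n (D.obj j)).symm)
      (fun {j j'} f => by
        refine ConcreteCategory.ext_apply fun v => ?_
        let v' : Fin n → ↥(D.obj j) := v
        let χ : FreeB n ⟶ D.obj j :=
          ConcreteCategory.ofHom (C := BoolRing) (theta v' : ((Fin n → Bool) → Bool) →+* ↥(D.obj j))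
        let ψ : ↥(FreeB n) →+* ↥(D.obj j') := toRH (χ ≫ D.map f)
        show (ConcreteCategory.ofHom (C := BoolRing) (theta (fun i => dmap D f (v' i))) : FreeB n ⟶ D.obj j') = χ ≫ D.map f
        apply ConcreteCategory.ext
        show theta (fun i => dmap D f (v' i)) = ψ
        have h1 : (fun i => dmap D f (v' i)) = fun i => ψ (pii n i) := by
          funext i
          show dmap D f (v' i) = dmap D f ((theta v') (pii n i))
          rw [theta_pi]
        rw [h1]
        exact theta_eval ψ)
  refine (IsColimit.equivOfNatIsoOfIso W (powCocone (colimit.cocone (KD D)) n)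
    ((coyoneda.obj (op (FreeB n))).mapCocone (ringCocone D))
    (Cocones.ext (Equiv.toIso (homEquiv n (BoolRing.of (TT D))).symm) ?_)).toFun hpow
  intro j
  refine ConcreteCategory.ext_apply fun v => ?_
  show ConcreteCategory.ofHom (C := BoolRing) (theta (fun i => tι D j (toRH v (pii n i))))
    = v ≫ (ringCocone D).ι.app j
  exact ConcreteCategory.ext (theta_eval (toRH (v ≫ (ringCocone D).ι.app j)))

/-- Transfer a cocone over the coyoneda diagram at `P` to one at `Q`. -/
noncomputable def trCocone {P Q : BoolRing.{0}} (p : P ⟶ Q)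
    (s : Cocone (D ⋙ coyoneda.obj (op P))) : Cocone (D ⋙ coyoneda.obj (op Q)) where
  pt := s.pt
  ι := { app := fun j => ↾(fun (ψ : Q ⟶ D.obj j) => s.ι.app j (p ≫ ψ))
         naturality := fun j j' f => by
           refine ConcreteCategory.ext_apply fun ψ => ?_
           have h := types_congr_hom (s.w f) (p ≫ ψ)
           simp only [types_comp_apply] at h ⊢
           show s.ι.app j' (p ≫ ψ ≫ D.map f) = s.ι.app j (p ≫ ψ)
           rw [← Category.assoc]
           exact h }

/-- Being a colimit after applying coyoneda passes to retracts of the corepresenting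
object. -/
noncomputable def retractIsColimit {P Q : BoolRing.{0}} (u : Q ⟶ P) (p : P ⟶ Q)
    (hpu : p ≫ u = 𝟙 P) (c : Cocone D)
    (hQ : IsColimit ((coyoneda.obj (op Q)).mapCocone c)) :
    IsColimit ((coyoneda.obj (op P)).mapCocone c) where
  desc s := ↾(fun (φ : P ⟶ c.pt) => hQ.desc (trCocone D p s) (u ≫ φ))
  fac s j := by
    refine ConcreteCategory.ext_apply fun (χ : P ⟶ D.obj j) => ?_
    show hQ.desc (trCocone D p s) (u ≫ χ ≫ c.ι.app j) = s.ι.app j χ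
    have h := types_congr_hom (hQ.fac (trCocone D p s) j) (u ≫ χ)
    simp only [types_comp_apply] at h
    refine ((congrArg (hQ.desc (trCocone D p s)) (Category.assoc u χ (c.ι.app j)).symm).trans h).trans ?_
    show s.ι.app j (p ≫ u ≫ χ) = s.ι.app j χ
    rw [← Category.assoc, hpu, Category.id_comp]
  uniq s m hm := by
    refine ConcreteCategory.ext_apply fun φ => ?_
    have hdesc : (↾(fun (ψ : Q ⟶ c.pt) => m (p ≫ ψ))) = hQ.desc (trCocone D p s) := by
      refine hQ.uniq (trCocone D p s) (↾(fun (ψ : Q ⟶ c.pt) => m (p ≫ ψ))) fun j => ?_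
      refine ConcreteCategory.ext_apply fun (ψ : Q ⟶ D.obj j) => ?_
      have h := types_congr_hom (hm j) (p ≫ ψ)
      simp only [types_comp_apply] at h ⊢
      show m (p ≫ ψ ≫ c.ι.app j) = s.ι.app j (p ≫ ψ)
      rw [← Category.assoc]
      exact h
    show m φ = hQ.desc (trCocone D p s) (u ≫ φ)
    rw [← hdesc]
    show m φ = m (p ≫ u ≫ φ)
    rw [← Category.assoc, hpu, Category.id_comp]

end Assemble
end SiftedBR

open SiftedBR Opposite in
/-- For a nonempty finite type `S`, the coyoneda functor at the Boolean ring `S → Bool`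
preserves sifted colimits: `S → Bool` is a compact `1`-projective object of the
category of Boolean rings. -/
theorem coyoneda_boolRing_preserves_sifted_colimits
    (S : Type) [Finite S] [Nonempty S] (J : Type) [SmallCategory J] [IsSifted J] :
    PreservesColimitsOfShape J
      (coyoneda.obj (Opposite.op (BoolRing.of (S → Bool)))) := by
  classical
  letI : Fintype S := Fintype.ofFinite S
  refine ⟨fun {D} => ?_⟩
  set n := Fintype.card S with hn
  let eqv : S ≃ Fin n := Fintype.equivFin S
  let ε : S → (Fin n → Bool) := fun s i => decide (i = eqv s)
  have hε : Function.Injective ε := by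
    intro s t h
    have h1 := congr_fun h (eqv s)
    have h2 : decide (eqv s = eqv s) = decide (eqv s = eqv t) := h1
    rw [decide_eq_true (Eq.refl (eqv s))] at h2
    exact eqv.injective (of_decide_eq_true h2.symm)
  let ρ : (Fin n → Bool) → S := Function.invFun ε
  have hρε : ∀ s, ρ (ε s) = s := fun s => Function.leftInverse_invFun hε s
  let u : FreeB n ⟶ BoolRing.of (S → Bool) :=
    ConcreteCategory.ofHom (C := BoolRing) (Pi.ringHom (fun s => Pi.evalRingHom (fun _ : Fin n → Bool => Bool) (ε s)) :
      ((Fin n → Bool) → Bool) →+* (S → Bool))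
  let p : BoolRing.of (S → Bool) ⟶ FreeB n :=
    ConcreteCategory.ofHom (C := BoolRing) (Pi.ringHom (fun b => Pi.evalRingHom (fun _ : S => Bool) (ρ b)) :
      (S → Bool) →+* ((Fin n → Bool) → Bool))
  have hpu : p ≫ u = 𝟙 (BoolRing.of (S → Bool)) := by
    apply (forget BoolRing).map_injective
    refine ConcreteCategory.ext_apply fun h => ?_
    show toRH u (toRH p h) = h
    funext s
    show h (ρ (ε s)) = h s
    rw [hρε]
  exact preservesColimit_of_preserves_colimit_cocone (ringIsColimit D)
    (retractIsColimit D u p hpu (ringCocone D) (freeMapIsColimit D n))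
end

section
/- Let X be a topological space and suppose the first projection pr₁ : X × X → X is a homotopy equivalence, i.e., there is a continuous map s : X → X × X with pr₁ ∘ s homotopic to the identity of X and s ∘ pr₁ homotopic to the identity of X × X. Then the set of path components of X is a subsingleton, and for every basepoint x : X and every natural number n, the homotopy group πₙ(X, x) is a subsingleton. In particular, X is empty or weakly contractible. -/
open scoped unitInterval Topology Topology.Homotopy
open Set ContinuousMap

/-- Collar construction: if `X` has a (free) contraction `K` to `x` whose basepoint trace
`t ↦ K (t, x)` admits a nullhomotopy square `P`, then every generalized loop is homotopic
to the constant loop rel boundary. -/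
lemma GenLoopAux.homotopic_const {X : Type*} [TopologicalSpace X] {x : X} {n : ℕ}
    (K : C(I × X, X)) (hK0 : ∀ z, K (0, z) = z) (hK1 : ∀ z, K (1, z) = x)
    (P : C(I × I, X)) (hP0 : ∀ t, P (0, t) = K (t, x)) (hP1 : ∀ t, P (1, t) = x)
    (hPs0 : ∀ u, P (u, 0) = x) (hPs1 : ∀ u, P (u, 1) = x)
    (f : GenLoop (Fin (n + 1)) X x) : GenLoop.Homotopic f GenLoop.const := by
  classical
  -- distance to the boundary
  set m : (Fin (n + 1) → I) → ℝ :=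
    fun y => Finset.univ.inf' Finset.univ_nonempty
      (fun j => min ((y j : ℝ)) (1 - (y j : ℝ))) with hm_def
  have hm_cont : Continuous m := by
    apply Continuous.finset_inf'_apply
    intro j _
    exact (continuous_subtype_val.comp (continuous_apply j)).min
      (continuous_const.sub (continuous_subtype_val.comp (continuous_apply j)))
  have hm_nonneg : ∀ y, 0 ≤ m y := by
    intro y
    apply Finset.le_inf'
    intro j _
    exact le_min (y j).2.1 (by linarith [(y j).2.2])
  have hm_boundary : ∀ y ∈ Cube.boundary (Fin (n + 1)), m y = 0 := by
    rintro y ⟨j, hj⟩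
    refine le_antisymm ?_ (hm_nonneg y)
    have : min ((y j : ℝ)) (1 - (y j : ℝ)) ≤ 0 := by
      rcases hj with hj | hj <;> rw [hj] <;> simp
    exact le_trans (Finset.inf'_le _ (Finset.mem_univ j)) this
  -- the clamped expansion map
  set ce : (Fin (n + 1) → I) → Fin (n + 1) → ℝ :=
    fun y j => max 0 (min 1 (2 * (y j : ℝ) - 2⁻¹)) with hce_def
  have hce_cont : ∀ j, Continuous fun y => ce y j := fun j =>
    continuous_const.max (continuous_const.min (by fun_prop))
  have hce_mem : ∀ y j, ce y j ∈ Icc (0 : ℝ) 1 :=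
    fun y j => ⟨le_max_left _ _, max_le zero_le_one (min_le_left _ _)⟩
  set e : C((Fin (n + 1) → I), (Fin (n + 1) → I)) :=
    ⟨fun y j => projIcc 0 1 zero_le_one (ce y j),
      continuous_pi fun j => continuous_projIcc.comp (hce_cont j)⟩ with he_def
  -- on the collar `m ≤ 1/4` the expanded loop is constant
  have hcollar : ∀ y, m y ≤ 4⁻¹ → f.1 (e y) = x := by
    intro y hy
    obtain ⟨j, -, hj⟩ := Finset.exists_mem_eq_inf' (Finset.univ_nonempty)
      (fun j => min ((y j : ℝ)) (1 - (y j : ℝ)))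
    replace hy : Finset.univ.inf' Finset.univ_nonempty
        (fun j => min ((y j : ℝ)) (1 - (y j : ℝ))) ≤ 4⁻¹ := hy
    rw [hj] at hy
    apply f.2
    rcases min_le_iff.1 hy with h' | h'
    · refine ⟨j, Or.inl ?_⟩
      have h1 : ce y j = 0 := by
        have : 2 * (y j : ℝ) - 2⁻¹ ≤ 0 := by linarith
        rw [hce_def]
        simp only []
        rw [min_eq_right (this.trans zero_le_one), max_eq_left this]
      show projIcc (0:ℝ) 1 zero_le_one (ce y j) = 0
      rw [h1]
      exact projIcc_left _
    · refine ⟨j, Or.inr ?_⟩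
      have h1 : ce y j = 1 := by
        have : (1 : ℝ) ≤ 2 * (y j : ℝ) - 2⁻¹ := by linarith
        rw [hce_def]
        simp only []
        rw [min_eq_left this, max_eq_right zero_le_one]
      show projIcc (0:ℝ) 1 zero_le_one (ce y j) = 1
      rw [h1]
      exact projIcc_right _
  -- Step 1: squeeze `f` onto the inner cube
  have G₁ : f.1.HomotopyRel (f.1.comp e) (Cube.boundary (Fin (n + 1))) :=
  { toFun := fun p => f.1 fun j =>
      projIcc 0 1 zero_le_one ((1 - (p.1 : ℝ)) * (p.2 j : ℝ) + (p.1 : ℝ) * ce p.2 j)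
    continuous_toFun := by
      apply f.1.continuous.comp
      refine continuous_pi fun j => continuous_projIcc.comp ?_
      have h1 : Continuous fun p : I × (Fin (n+1) → I) => (p.1 : ℝ) :=
        continuous_subtype_val.comp continuous_fst
      have h2 : Continuous fun p : I × (Fin (n+1) → I) => (p.2 j : ℝ) :=
        continuous_subtype_val.comp ((continuous_apply j).comp continuous_snd)
      have h3 : Continuous fun p : I × (Fin (n+1) → I) => ce p.2 j :=
        (hce_cont j).comp continuous_snd
      fun_prop
    map_zero_left := by
      intro y
      show f.1 _ = f.1 y
      refine congrArg _ (funext fun j => ?_)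
      have c0 : (((0:I)) : ℝ) = 0 := rfl
      rw [show (1 - (((0:I)) : ℝ)) * (y j : ℝ) + (((0:I)) : ℝ) * ce y j = ((y j : ℝ)) by
        rw [c0]; ring]
      exact projIcc_val zero_le_one (y j)
    map_one_left := by
      intro y
      show f.1 _ = f.1 (e y)
      refine congrArg _ (funext fun j => ?_)
      have c1 : (((1:I)) : ℝ) = 1 := rfl
      rw [show (1 - (((1:I)) : ℝ)) * (y j : ℝ) + (((1:I)) : ℝ) * ce y j = ce y j by
        rw [c1]; ring]
      rfl
    prop' := by
      rintro t y ⟨j, hj⟩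
      have hb : (fun j' =>
          projIcc (0:ℝ) 1 zero_le_one ((1 - (t : ℝ)) * (y j' : ℝ) + (t : ℝ) * ce y j'))
          ∈ Cube.boundary (Fin (n + 1)) := by
        refine ⟨j, ?_⟩
        rcases hj with hj | hj
        · left
          show projIcc (0:ℝ) 1 zero_le_one ((1 - (t : ℝ)) * (y j : ℝ) + (t : ℝ) * ce y j) = 0
          have hy : (y j : ℝ) = 0 := by rw [hj]; rfl
          have hc : ce y j = 0 := by
            rw [hce_def]; simp only []
            rw [hy]
            rw [min_eq_right (by norm_num), max_eq_left (by norm_num)]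
          rw [hy, hc]
          rw [show (1 - (t : ℝ)) * 0 + (t : ℝ) * 0 = 0 by ring]
          exact projIcc_left _
        · right
          show projIcc (0:ℝ) 1 zero_le_one ((1 - (t : ℝ)) * (y j : ℝ) + (t : ℝ) * ce y j) = 1
          have hy : (y j : ℝ) = 1 := by rw [hj]; rfl
          have hc : ce y j = 1 := by
            rw [hce_def]; simp only []
            rw [hy]
            rw [min_eq_left (by norm_num), max_eq_right (by norm_num)]
          rw [hy, hc]
          rw [show (1 - (t : ℝ)) * 1 + (t : ℝ) * 1 = 1 by ring]
          exact projIcc_right _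
      show f.1 _ = f.1 y
      rw [f.2 _ hb, f.2 y ⟨j, hj⟩] }
  -- Step 2: contract the inner cube, absorbing the trace in the collar
  have G₂ : (f.1.comp e).HomotopyRel (ContinuousMap.const _ x) (Cube.boundary (Fin (n + 1))) :=
  { toFun := fun p =>
      if m p.2 ≤ 4⁻¹ then P (projIcc 0 1 zero_le_one (1 - 4 * m p.2), p.1)
      else K (p.1, f.1 (e p.2))
    continuous_toFun := by
      apply Continuous.if_le
      · exact P.continuous.comp ((continuous_projIcc.comp
          (continuous_const.sub (continuous_const.mul (hm_cont.comp continuous_snd)))).prodMk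
          continuous_fst)
      · exact K.continuous.comp (continuous_fst.prodMk
          ((f.1.continuous.comp e.continuous).comp continuous_snd))
      · exact hm_cont.comp continuous_snd
      · exact continuous_const
      · intro p hp
        have h1 : projIcc (0:ℝ) 1 zero_le_one (1 - 4 * m p.2) = 0 := by
          rw [hp]
          norm_num
        rw [h1, hP0, hcollar p.2 (le_of_eq hp)]
    map_zero_left := by
      intro y
      show (if m y ≤ 4⁻¹ then P (_, 0) else K (0, f.1 (e y))) = (f.1.comp e) y
      split_ifs with hc
      · rw [hPs0, ContinuousMap.comp_apply, hcollar y hc]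
      · rw [hK0]; rfl
    map_one_left := by
      intro y
      show (if m y ≤ 4⁻¹ then P (_, 1) else K (1, f.1 (e y))) = x
      split_ifs with hc
      · exact hPs1 _
      · exact hK1 _
    prop' := by
      intro t y hy
      have h0 : m y = 0 := hm_boundary y hy
      show (if m y ≤ 4⁻¹ then P (_, t) else K (t, f.1 (e y))) = (f.1.comp e) y
      rw [if_pos (by rw [h0]; norm_num)]
      have h1 : projIcc (0:ℝ) 1 zero_le_one (1 - 4 * m y) = 1 := by
        rw [h0]
        norm_num
      rw [h1, hP1, ContinuousMap.comp_apply, hcollar y (by rw [h0]; norm_num)] }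
  exact ⟨G₁.trans G₂⟩

/-- If the first projection `X × X → X` is a homotopy equivalence, then `X` has at most one
path component and all of its homotopy groups are trivial: `X` is empty or weakly
contractible. -/
theorem weakly_contractible_of_prod_proj_homotopy_equiv (X : Type*) [TopologicalSpace X]
    (h : ∃ s : C(X, X × X),
      (ContinuousMap.fst.comp s).Homotopic (ContinuousMap.id X) ∧
      (s.comp ContinuousMap.fst).Homotopic (ContinuousMap.id (X × X))) :
    Subsingleton (ZerothHomotopy X) ∧
      ∀ (x : X) (n : ℕ), Subsingleton (HomotopyGroup (Fin n) X x) := by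
  obtain ⟨s, _h1, h2⟩ := h
  set d : C(X, X × X) := (ContinuousMap.id X).prodMk (ContinuousMap.id X) with hd_def
  -- `s` is homotopic to the diagonal
  have hsd : s.Homotopic d := by
    have H := ContinuousMap.Homotopic.comp h2 (ContinuousMap.Homotopic.refl d)
    rwa [ContinuousMap.id_comp,
      show (s.comp ContinuousMap.fst).comp d = s from ContinuousMap.ext fun y => rfl] at H
  -- hence `snd ∘ s ≃ id`
  have h3 : (ContinuousMap.snd.comp s).Homotopic (ContinuousMap.id X) := by
    have H := ContinuousMap.Homotopic.comp (ContinuousMap.Homotopic.refl (ContinuousMap.snd : C(X × X, X))) hsd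
    rwa [show (ContinuousMap.snd.comp d : C(X, X)) = ContinuousMap.id X from
      ContinuousMap.ext fun y => rfl] at H
  -- and the two projections are homotopic
  have hfs : (ContinuousMap.fst : C(X × X, X)).Homotopic ContinuousMap.snd := by
    have Ha := ContinuousMap.Homotopic.comp h3 (ContinuousMap.Homotopic.refl (ContinuousMap.fst : C(X × X, X)))
    rw [ContinuousMap.id_comp] at Ha
    have Hb := ContinuousMap.Homotopic.comp (ContinuousMap.Homotopic.refl (ContinuousMap.snd : C(X × X, X))) h2
    rw [ContinuousMap.comp_id] at Hb
    exact Ha.symm.trans Hb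
  obtain ⟨F⟩ := hfs
  have joined : ∀ a b : X, Joined a b := by
    intro a b
    exact ⟨{ toFun := fun t => F (t, (a, b))
             continuous_toFun := F.continuous.comp (continuous_id.prodMk continuous_const)
             source' := by simp
             target' := by simp }⟩
  have hz : Subsingleton (ZerothHomotopy X) := by
    constructor
    intro a b
    exact Quotient.inductionOn₂ a b fun p q => Quotient.sound (joined p q)
  refine ⟨hz, fun x n => ?_⟩
  -- contraction of `X`
  have K : ContinuousMap.Homotopy (ContinuousMap.id X) (ContinuousMap.const X x) :=
  { toFun := fun p => F (p.1, (p.2, x))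
    continuous_toFun := F.continuous.comp
      (continuous_fst.prodMk (continuous_snd.prodMk continuous_const))
    map_zero_left := by intro y; simp
    map_one_left := by intro y; simp }
  haveI : ContractibleSpace X := (contractible_iff_id_nullhomotopic X).mpr ⟨x, Nonempty.intro K⟩
  match n with
  | 0 =>
    haveI := hz
    exact (homotopyGroupEquivZerothHomotopyOfIsEmpty (Fin 0) x).subsingleton
  | (n + 1) =>
    -- the basepoint trace is a loop, nullhomotopic by simple connectivity
    let γ : Path x x :=
    { toFun := fun t => F (t, (x, x))
      continuous_toFun := F.continuous.comp (continuous_id.prodMk continuous_const)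
      source' := by simp
      target' := by simp }
    obtain ⟨Ph⟩ := SimplyConnectedSpace.paths_homotopic γ (Path.refl x)
    have hconst : ∀ f : GenLoop (Fin (n + 1)) X x, GenLoop.Homotopic f GenLoop.const := by
      intro f
      refine GenLoopAux.homotopic_const
        ⟨fun p => F (p.1, (p.2, x)), F.continuous.comp
          (continuous_fst.prodMk (continuous_snd.prodMk continuous_const))⟩
        (fun z => by simp) (fun z => by simp)
        ⟨fun p => Ph (p.1, p.2), Ph.continuous.comp (continuous_fst.prodMk continuous_snd)⟩
        ?_ ?_ ?_ ?_ f
      · intro t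
        show Ph (0, t) = F (t, (x, x))
        rw [Ph.apply_zero]
        rfl
      · intro t
        show Ph (1, t) = x
        rw [Ph.apply_one]
        rfl
      · intro u
        show Ph (u, 0) = x
        rw [Ph.eq_fst u (by left; rfl)]
        exact γ.source
      · intro u
        show Ph (u, 1) = x
        rw [Ph.eq_fst u (by right; rfl)]
        exact γ.target
    constructor
    intro a b
    exact Quotient.inductionOn₂ a b fun p q =>
      Quotient.sound ((hconst p).trans (GenLoop.Homotopic.symm (hconst q)))
end

section
/- Let G be a topological group and m a natural number such that g ^ m = 1 for every g ∈ G. Then for every natural number n ≥ 1, every element α of the homotopy group πₙ(G, 1) based at the identity satisfies α ^ m = 1. -/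
open Topology Topology.Homotopy GenLoop

noncomputable section

set_option linter.unusedSectionVars false

namespace GenLoopAux

variable {N : Type*} [DecidableEq N] {G : Type*} [TopologicalSpace G] [Group G]
  [IsTopologicalGroup G]

/-- Class of a generalized loop in the homotopy group. -/
abbrev mk (f : Ω^ N G (1 : G)) : HomotopyGroup N G (1 : G) := ⟦f⟧

/-- Pointwise multiplication of generalized loops in a topological group. -/
def ptMul (f g : Ω^ N G (1 : G)) : Ω^ N G (1 : G) :=
  ⟨f.1 * g.1, fun y hy => by
    simp only [ContinuousMap.mul_apply]
    rw [f.2 y hy, g.2 y hy, one_mul]⟩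

theorem ptMul_apply (f g : Ω^ N G (1 : G)) (y : N → unitInterval) :
    ptMul f g y = f y * g y := rfl

/-- Pointwise multiplication respects homotopy rel boundary. -/
theorem ptMul_homotopic {f f' g g' : Ω^ N G (1 : G)}
    (hf : GenLoop.Homotopic f f') (hg : GenLoop.Homotopic g g') :
    GenLoop.Homotopic (ptMul f g) (ptMul f' g') := by
  obtain ⟨Hf⟩ := hf
  obtain ⟨Hg⟩ := hg
  exact ⟨{ toFun := fun p => Hf p * Hg p
           continuous_toFun := Hf.continuous.mul Hg.continuous
           map_zero_left := fun y => by
             show Hf (0, y) * Hg (0, y) = ptMul f g y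
             rw [ptMul_apply, Hf.apply_zero, Hg.apply_zero]; rfl
           map_one_left := fun y => by
             show Hf (1, y) * Hg (1, y) = ptMul f' g' y
             rw [ptMul_apply, Hf.apply_one, Hg.apply_one]; rfl
           prop' := fun t y hy => by
             show Hf (t, y) * Hg (t, y) = _
             rw [Hf.eq_fst t hy, Hg.eq_fst t hy]; rfl }⟩

/-- Pointwise multiplication on the homotopy group. -/
def qMul (a b : HomotopyGroup N G (1 : G)) : HomotopyGroup N G (1 : G) :=
  Quotient.map₂ ptMul (fun _ _ h₁ _ _ h₂ => ptMul_homotopic h₁ h₂) a b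

theorem qMul_mk (f g : Ω^ N G (1 : G)) : qMul (mk f) (mk g) = mk (ptMul f g) := rfl

theorem ptMul_const (f : Ω^ N G (1 : G)) : ptMul f GenLoop.const = f := by
  ext y; simp [ptMul_apply, GenLoop.const_apply]

theorem const_ptMul (f : Ω^ N G (1 : G)) : ptMul GenLoop.const f = f := by
  ext y; simp [ptMul_apply, GenLoop.const_apply]

theorem isUnital_qMul :
    EckmannHilton.IsUnital qMul (mk (GenLoop.const : Ω^ N G (1 : G))) where
  left_id := fun a => by
    obtain ⟨f, rfl⟩ := Quotient.exists_rep a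
    show qMul (mk GenLoop.const) (mk f) = mk f
    rw [qMul_mk, const_ptMul]
  right_id := fun a => by
    obtain ⟨f, rfl⟩ := Quotient.exists_rep a
    show qMul (mk f) (mk GenLoop.const) = mk f
    rw [qMul_mk, ptMul_const]

theorem ptMul_transAt (i : N) (a b c d : Ω^ N G (1 : G)) :
    ptMul (GenLoop.transAt i a b) (GenLoop.transAt i c d)
      = GenLoop.transAt i (ptMul a c) (ptMul b d) := by
  ext y
  simp only [ptMul_apply, GenLoop.transAt, GenLoop.coe_copy]
  split_ifs <;> rfl

/-- By Eckmann–Hilton, the group multiplication equals pointwise multiplication. -/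
theorem mul_eq_qMul [Nonempty N] (a b : HomotopyGroup N G (1 : G)) :
    a * b = qMul a b := by
  have key : ((· * ·) : HomotopyGroup N G (1 : G) → _ → _) = qMul := by
    refine EckmannHilton.mul (e₁ := mk GenLoop.const) (e₂ := mk GenLoop.const) ?_
      isUnital_qMul ?_
    · exact { left_id := fun a => one_mul a, right_id := fun a => mul_one a }
    · rintro ⟨a⟩ ⟨b⟩ ⟨c⟩ ⟨d⟩
      show mk (ptMul a b) * mk (ptMul c d) = qMul (mk a * mk c) (mk b * mk d)
      have hmul : ∀ p q : Ω^ N G (1 : G),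
          mk p * mk q = mk (GenLoop.transAt (Classical.arbitrary N) q p) := fun p q =>
        HomotopyGroup.mul_spec
      rw [hmul, hmul, hmul, qMul_mk, ptMul_transAt]
  exact congrFun (congrFun key a) b

/-- Pointwise power of a generalized loop. -/
def ptPow (f : Ω^ N G (1 : G)) (k : ℕ) : Ω^ N G (1 : G) :=
  ⟨f.1 ^ k, fun y hy => by
    simp only [ContinuousMap.pow_apply]
    rw [f.2 y hy, one_pow]⟩

theorem pow_mk [Nonempty N] (f : Ω^ N G (1 : G)) (k : ℕ) :
    mk f ^ k = mk (ptPow f k) := by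
  induction k with
  | zero =>
    have h : ptPow f 0 = (GenLoop.const : Ω^ N G (1 : G)) := by
      ext y
      show (f y) ^ 0 = _
      simp [GenLoop.const_apply]
    rw [pow_zero, h]; rfl
  | succ k ih =>
    rw [pow_succ, ih, mul_eq_qMul, qMul_mk]
    congr 1
    ext y
    show (f y) ^ k * f y = (f y) ^ (k + 1)
    rw [pow_succ]

end GenLoopAux

end

/-- If `G` is a topological group in which `g ^ m = 1` for every `g`, then every element of
each higher homotopy group `πₙ(G, 1)`, `n ≥ 1`, satisfies `α ^ m = 1`. -/
theorem homotopyGroup_pow_eq_one_of_pow_eq_one (G : Type*) [TopologicalSpace G] [Group G]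
    [IsTopologicalGroup G] (m : ℕ) (hm : ∀ g : G, g ^ m = 1) (n : ℕ)
    (α : HomotopyGroup (Fin (n + 1)) G (1 : G)) : α ^ m = 1 := by
  obtain ⟨f, rfl⟩ := Quotient.exists_rep α
  show GenLoopAux.mk f ^ m = 1
  rw [GenLoopAux.pow_mk]
  have h : GenLoopAux.ptPow f m = (GenLoop.const : Ω^ (Fin (n + 1)) G (1 : G)) := by
    ext y
    show (f y) ^ m = _
    simp [GenLoop.const_apply, hm]
  rw [h]; rfl
end

section
/- Let X be a cosimplicial finite set, i.e., a functor X : SimplexCategory ⥤ FintypeCat, with coface maps d⁰ = X(δ₀) and d¹ = X(δ₁) from X[0] to X[1], and let L = {a ∈ X[0] | d⁰ a = d¹ a} be the equalizer (the limit of X). Consider the two maps P(d⁰), P(d¹) : Set (X[1]) → Set (X[0]) given by preimage along d⁰ and d¹. Then the restriction map Set (X[0]) → Set L, S ↦ {a ∈ L | a ∈ S} (preimage under the inclusion L ↪ X[0]), induces a bijection from the coequalizer in Type of P(d⁰) and P(d¹) onto Set L, the power set of L. -/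
open CategoryTheory SimplexCategory

private lemma ps_retr0 (X : SimplexCategory ⥤ FintypeCat) (a : X.obj (mk 0)) :
    X.map (σ 0) (X.map (δ (0 : Fin 2)) a) = a := by
  have h0 : δ (0 : Fin 2) ≫ σ 0 = 𝟙 (mk 0) := δ_comp_σ_self
  have := congrArg (fun f => X.map f a) h0
  simpa [X.map_comp, FintypeCat.comp_apply] using this

private lemma ps_retr1 (X : SimplexCategory ⥤ FintypeCat) (a : X.obj (mk 0)) :
    X.map (σ 0) (X.map (δ (1 : Fin 2)) a) = a := by
  have h1 : δ (1 : Fin 2) ≫ σ 0 = 𝟙 (mk 0) := δ_comp_σ_succ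
  have := congrArg (fun f => X.map f a) h1
  simpa [X.map_comp, FintypeCat.comp_apply] using this

private lemma ps_key (X : SimplexCategory ⥤ FintypeCat) {a b : X.obj (mk 0)}
    (h : X.map (δ (0 : Fin 2)) a = X.map (δ (1 : Fin 2)) b) : a = b := by
  rw [← ps_retr0 X a, h, ps_retr1]

private lemma ps_inj0 (X : SimplexCategory ⥤ FintypeCat) {a b : X.obj (mk 0)}
    (h : X.map (δ (0 : Fin 2)) a = X.map (δ (0 : Fin 2)) b) : a = b := by
  rw [← ps_retr0 X a, h, ps_retr0]

private lemma ps_inj1 (X : SimplexCategory ⥤ FintypeCat) {a b : X.obj (mk 0)}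
    (h : X.map (δ (1 : Fin 2)) a = X.map (δ (1 : Fin 2)) b) : a = b := by
  rw [← ps_retr1 X a, h, ps_retr1]

/-- For a cosimplicial finite set `X` with coface maps `d⁰, d¹ : X[0] → X[1]` and
equalizer `L = {a | d⁰ a = d¹ a}`, the restriction map on power sets induces a bijection
from the coequalizer (in `Type`) of the preimage maps
`P(d⁰), P(d¹) : Set X[1] → Set X[0]` onto the power set of `L`. -/
theorem powerSet_coequalizer_bijective (X : SimplexCategory ⥤ FintypeCat) :
    Function.Bijective
      (Quot.lift
        (fun S : Set (X.obj (mk 0)) =>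
          (Subtype.val ⁻¹' S :
            Set {a : X.obj (mk 0) //
              X.map (δ (0 : Fin 2)) a = X.map (δ (1 : Fin 2)) a}))
        (fun S S' h => by
          obtain ⟨T, rfl, rfl⟩ := h
          ext a
          simpa using by rw [a.2] :
          ∀ S S', (∃ T : Set (X.obj (mk 1)),
              X.map (δ (0 : Fin 2)) ⁻¹' T = S ∧ X.map (δ (1 : Fin 2)) ⁻¹' T = S') →
            _ = _) :
        Quot (fun S S' : Set (X.obj (mk 0)) => ∃ T : Set (X.obj (mk 1)),
            X.map (δ (0 : Fin 2)) ⁻¹' T = S ∧ X.map (δ (1 : Fin 2)) ⁻¹' T = S') →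
          Set {a : X.obj (mk 0) //
            X.map (δ (0 : Fin 2)) a = X.map (δ (1 : Fin 2)) a}) := by
  set L : Set (X.obj (mk 0)) :=
    {a | X.map (δ (0 : Fin 2)) a = X.map (δ (1 : Fin 2)) a} with hLdef
  constructor
  · intro q q' hq
    induction q using Quot.ind with | _ S => ?_
    induction q' using Quot.ind with | _ S' => ?_
    have h : (Subtype.val ⁻¹' S :
        Set {a : X.obj (mk 0) //
          X.map (δ (0 : Fin 2)) a = X.map (δ (1 : Fin 2)) a}) = Subtype.val ⁻¹' S' := hq
    have hSL : ∀ a : X.obj (mk 0), X.map (δ (0 : Fin 2)) a = X.map (δ (1 : Fin 2)) a →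
        (a ∈ S ↔ a ∈ S') := fun a ha => Set.ext_iff.mp h ⟨a, ha⟩
    apply Quot.sound
    refine ⟨X.map (δ (0 : Fin 2)) '' S ∪ X.map (δ (1 : Fin 2)) '' (S' \ L), ?_, ?_⟩
    · ext a
      simp only [Set.mem_preimage, Set.mem_union, Set.mem_image]
      constructor
      · rintro (⟨x, hx, hxa⟩ | ⟨x, hx, hxa⟩)
        · rwa [ps_inj0 X hxa.symm]
        · obtain rfl : a = x := ps_key X hxa.symm
          exact absurd hxa.symm hx.2
      · intro ha; exact Or.inl ⟨a, ha, rfl⟩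
    · ext b
      simp only [Set.mem_preimage, Set.mem_union, Set.mem_image]
      constructor
      · rintro (⟨x, hx, hxb⟩ | ⟨x, hx, hxb⟩)
        · have hxb' : x = b := ps_key X hxb
          subst hxb'
          have hbL : X.map (δ (0 : Fin 2)) x = X.map (δ (1 : Fin 2)) x := hxb
          exact (hSL x hbL).mp hx
        · exact ps_inj1 X hxb ▸ hx.1
      · intro hb
        by_cases hbL : X.map (δ (0 : Fin 2)) b = X.map (δ (1 : Fin 2)) b
        · exact Or.inl ⟨b, (hSL b hbL).mpr hb, hbL⟩
        · exact Or.inr ⟨b, ⟨hb, hbL⟩, rfl⟩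
  · intro U
    refine ⟨Quot.mk _ (Subtype.val '' U), ?_⟩
    show Subtype.val ⁻¹' (Subtype.val '' U) = U
    exact Set.preimage_image_eq U Subtype.val_injective
end
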